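/- arXiv:1204.4533 — 4 statements merged into one kernel-verified Lean document; each statement's English description precedes it below -/
import Mathlib

section
/- Let V be an FI#-module over a field k of arbitrary characteristic. The following are equivalent: (i) V is finitely generated as an FI-module; (ii) dim_k(V_n) is bounded above by a polynomial in n; (iii) there is a polynomial P ∈ Q[T] such that dim_k(V_n) = P(n) for all n ≥ 0. Moreover, over an arbitrary commutative ring k, V is finitely generated if and only if the k-module V_n is generated by O(n^d) elements for some d. -/
set_option synthInstance.maxHeartbeats 1000000
set_option maxHeartbeats 1600000


open Function

universe u

/-- An FI-module over `k`, presented via the standard skeleton of the category FI: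
objects are natural numbers `n` (standing for `{1,…,n}`) and morphisms `m ⟶ n` are
injections `Fin m ↪ Fin n`. -/
structure FIModule (k : Type) [CommRing k] where
  obj : ℕ → Type
  [isAddCommGroup : ∀ n, AddCommGroup (obj n)]
  [isModule : ∀ n, Module k (obj n)]
  map : ∀ {m n : ℕ}, (Fin m ↪ Fin n) → (obj m →ₗ[k] obj n)
  map_id : ∀ n : ℕ, map (Embedding.refl (Fin n)) = LinearMap.id
  map_comp : ∀ {m n p : ℕ} (f : Fin m ↪ Fin n) (g : Fin n ↪ Fin p),
    map (f.trans g) = (map g).comp (map f)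

attribute [instance] FIModule.isAddCommGroup FIModule.isModule

variable {k : Type} [CommRing k]

/-- A sub-FI-module of an FI-module: a submodule of each `V_n`, preserved by all the
maps induced by injections. -/
structure SubFI (V : FIModule k) where
  carrier : ∀ n : ℕ, Submodule k (V.obj n)
  map_mem : ∀ {m n : ℕ} (f : Fin m ↪ Fin n) {x : V.obj m},
    x ∈ carrier m → V.map f x ∈ carrier n

/-- An FI-module is finitely generated if some finite set of elements of `∐ V_n` is
contained in no proper sub-FI-module. -/
def FIModule.FinitelyGenerated (V : FIModule k) : Prop :=
  ∃ S : Finset (Σ n : ℕ, V.obj n),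
    ∀ N : SubFI V, (∀ s ∈ S, s.2 ∈ N.carrier s.1) → ∀ (n : ℕ) (x : V.obj n), x ∈ N.carrier n

/-- An FI-module is generated in degree `≤ d` if the only sub-FI-module containing all
`V_m` for `m ≤ d` is the whole module. -/
def FIModule.GeneratedInDegreeLE (V : FIModule k) (d : ℕ) : Prop :=
  ∀ N : SubFI V, (∀ m : ℕ, m ≤ d → ∀ x : V.obj m, x ∈ N.carrier m) →
    ∀ (n : ℕ) (x : V.obj n), x ∈ N.carrier n

/-- The `S_n`-representation on `V_n` induced by an FI-module structure. -/
def FIModule.rep (V : FIModule k) (n : ℕ) :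
    Representation k (Equiv.Perm (Fin n)) (V.obj n) where
  toFun σ := V.map σ.toEmbedding
  map_one' := by
    show V.map (1 : Equiv.Perm (Fin n)).toEmbedding = 1
    have h : (1 : Equiv.Perm (Fin n)).toEmbedding = Embedding.refl (Fin n) := rfl
    rw [h, V.map_id]; rfl
  map_mul' σ τ := by
    show V.map (σ * τ).toEmbedding = V.map σ.toEmbedding * V.map τ.toEmbedding
    have h : (σ * τ).toEmbedding = (τ.toEmbedding).trans σ.toEmbedding := rfl
    rw [h, V.map_comp]; rfl

/-- The standard inclusion `{1,…,n} ↪ {1,…,n+1}`. -/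
def succEmb (n : ℕ) : Fin n ↪ Fin (n + 1) := Fin.castLEEmb (Nat.le_succ n)

/-! ### The category FI♯ of partial injections -/

/-- A morphism `m ⟶ n` in the category FI♯: a partial injection from `{1,…,m}` to
`{1,…,n}`, i.e. a bijection `φ : A → B` between a subset `A ⊆ {1,…,m}` and a subset
`B ⊆ {1,…,n}`, encoded as an injective partial function. -/
structure PartialInj (m n : ℕ) where
  toFun : Fin m → Option (Fin n)
  inj : ∀ ⦃i j : Fin m⦄ ⦃x : Fin n⦄, toFun i = some x → toFun j = some x → i = j

theorem PartialInj.ext {m n : ℕ} {f g : PartialInj m n}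
    (h : ∀ i, f.toFun i = g.toFun i) : f = g := by
  cases f; cases g
  simp only [PartialInj.mk.injEq]
  exact funext h

/-- The identity morphism of FI♯. -/
def PartialInj.id (n : ℕ) : PartialInj n n :=
  ⟨fun i => some i, fun i j x hi hj => by
    rw [(Option.some.inj hi), (Option.some.inj hj)]⟩

/-- Composition of partial injections (as partial functions). -/
def PartialInj.comp {m n p : ℕ} (g : PartialInj n p) (f : PartialInj m n) :
    PartialInj m p :=
  ⟨fun i => (f.toFun i).bind g.toFun, by
    intro i j x hi hj
    obtain ⟨y, hy, hgy⟩ := Option.bind_eq_some_iff.mp hi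
    obtain ⟨z, hz, hgz⟩ := Option.bind_eq_some_iff.mp hj
    obtain rfl : y = z := g.inj hgy hgz
    exact f.inj hy hz⟩

/-- An FI♯-module over `k`: a functor from the category FI♯ (partial injections of
finite sets) to `k`-modules, presented via the skeleton with objects `ℕ`. -/
structure FIsharpModule (k : Type) [CommRing k] where
  obj : ℕ → Type
  [isAddCommGroup : ∀ n, AddCommGroup (obj n)]
  [isModule : ∀ n, Module k (obj n)]
  map : ∀ {m n : ℕ}, PartialInj m n → (obj m →ₗ[k] obj n)
  map_id : ∀ n : ℕ, map (PartialInj.id n) = LinearMap.id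
  map_comp : ∀ {m n p : ℕ} (f : PartialInj m n) (g : PartialInj n p),
    map (g.comp f) = (map g).comp (map f)

attribute [instance] FIsharpModule.isAddCommGroup FIsharpModule.isModule

/-- The morphism of FI♯ determined by an honest injection (the case `A = S` of a
triple `(A,B,φ)`). -/
def embToPartial {m n : ℕ} (f : Fin m ↪ Fin n) : PartialInj m n :=
  ⟨fun i => some (f i), fun _ _ _ hi hj =>
    f.injective ((Option.some.inj hi).trans (Option.some.inj hj).symm)⟩

theorem embToPartial_id (n : ℕ) :
    embToPartial (Embedding.refl (Fin n)) = PartialInj.id n := rfl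

theorem embToPartial_comp {m n p : ℕ} (f : Fin m ↪ Fin n) (g : Fin n ↪ Fin p) :
    embToPartial (f.trans g) = (embToPartial g).comp (embToPartial f) :=
  PartialInj.ext (fun _ => rfl)

/-- The FI-module underlying an FI♯-module, obtained by restricting to the morphisms
of FI♯ coming from honest injections. -/
def FIsharpModule.toFI (V : FIsharpModule k) : FIModule k where
  obj := V.obj
  map f := V.map (embToPartial f)
  map_id n := by
    show V.map (embToPartial (Embedding.refl (Fin n))) = LinearMap.id
    rw [embToPartial_id, V.map_id]
  map_comp f g := by
    show V.map (embToPartial (f.trans g))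
        = (V.map (embToPartial g)).comp (V.map (embToPartial f))
    rw [embToPartial_comp, V.map_comp]

namespace CEF

open Finset

/-- partial identity on a subset -/
def pId {n : ℕ} (S : Finset (Fin n)) : PartialInj n n :=
  ⟨fun i => if i ∈ S then some i else none, by
    intro i j x hi hj
    split_ifs at hi hj
    exact (Option.some.inj hi).trans (Option.some.inj hj).symm⟩

@[simp] theorem pId_toFun {n : ℕ} (S : Finset (Fin n)) (i : Fin n) :
    (pId S).toFun i = if i ∈ S then some i else none := rfl

theorem pId_comp_pId {n : ℕ} (S T : Finset (Fin n)) :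
    (pId S).comp (pId T) = pId (S ∩ T) := by
  apply PartialInj.ext; intro i
  simp only [PartialInj.comp, pId_toFun, mem_inter]
  by_cases hT : i ∈ T <;> by_cases hS : i ∈ S <;> simp [hT, hS]

theorem pId_univ {n : ℕ} : pId (univ : Finset (Fin n)) = PartialInj.id n := by
  apply PartialInj.ext; intro i; simp [PartialInj.id]

/-- partial inverse of an injection -/
noncomputable def pInv {a n : ℕ} (f : Fin a ↪ Fin n) : PartialInj n a :=
  ⟨fun i => if h : ∃ j, f j = i then some h.choose else none, by
    intro i j x hi hj
    split_ifs at hi hj with h1 h2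
    rw [← h1.choose_spec, ← h2.choose_spec, Option.some.inj hi, Option.some.inj hj]⟩

theorem pInv_eq_some_iff {a n : ℕ} (f : Fin a ↪ Fin n) {i : Fin n} {x : Fin a} :
    (pInv f).toFun i = some x ↔ f x = i := by
  constructor
  · intro h
    simp only [pInv] at h
    split_ifs at h with h1
    rw [← Option.some.inj h]
    exact h1.choose_spec
  · intro h
    have h1 : ∃ j, f j = i := ⟨x, h⟩
    simp only [pInv, dif_pos h1]
    congr 1
    exact f.injective (h1.choose_spec.trans h.symm)

theorem pInv_apply {a n : ℕ} (f : Fin a ↪ Fin n) (j : Fin a) :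
    (pInv f).toFun (f j) = some j := (pInv_eq_some_iff f).mpr rfl

theorem pInv_eq_none {a n : ℕ} (f : Fin a ↪ Fin n) {i : Fin n} (h : ∀ j, f j ≠ i) :
    (pInv f).toFun i = none := by
  have h' : ¬ ∃ j, f j = i := by push_neg; exact h
  simp only [pInv, dif_neg h']

theorem pInv_comp_emb {a n : ℕ} (f : Fin a ↪ Fin n) :
    (pInv f).comp (embToPartial f) = PartialInj.id a := by
  apply PartialInj.ext; intro i
  simp [PartialInj.comp, embToPartial, pInv_apply, PartialInj.id]

theorem emb_comp_pInv {a n : ℕ} (f : Fin a ↪ Fin n) :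
    (embToPartial f).comp (pInv f) = pId (univ.image f) := by
  apply PartialInj.ext; intro i
  simp only [PartialInj.comp, pId_toFun, mem_image, mem_univ, true_and]
  by_cases h : ∃ j, f j = i
  · obtain ⟨j, hj⟩ := h
    rw [← hj, pInv_apply]
    simp [embToPartial, exists_apply_eq_apply]
  · rw [pInv_eq_none f (fun j hj => h ⟨j, hj⟩)]
    simp [h]

theorem pId_comp_emb {a n : ℕ} (f : Fin a ↪ Fin n) (S : Finset (Fin n))
    (hf : ∀ j, f j ∈ S) : (pId S).comp (embToPartial f) = embToPartial f := by
  apply PartialInj.ext; intro i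
  simp [PartialInj.comp, embToPartial, hf i]

theorem pDel_comp_emb {a n : ℕ} (f : Fin a ↪ Fin n) (j : Fin n)
    (hf : ∀ i, f i ≠ j) : (pId ({j}ᶜ)).comp (embToPartial f) = embToPartial f :=
  pId_comp_emb f _ (fun i => by simp [hf i])

theorem pDel_comp_pInv {a n : ℕ} (f : Fin a ↪ Fin n) (j : Fin a) :
    (pId ({j}ᶜ)).comp (pInv f) = (pInv f).comp (pId ({f j}ᶜ)) := by
  apply PartialInj.ext; intro i
  simp only [PartialInj.comp, pId_toFun, mem_compl, mem_singleton]
  by_cases h : ∃ x, f x = i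
  · obtain ⟨x, hx⟩ := h
    subst hx
    rw [pInv_apply]
    by_cases hxj : x = j
    · subst hxj; simp
    · have : f x ≠ f j := fun hc => hxj (f.injective hc)
      simp [hxj, this, pInv_apply]
  · have hn := pInv_eq_none f (fun x hx => h ⟨x, hx⟩)
    rw [hn]
    split_ifs with h2 <;> simp [hn]


variable (V : FIsharpModule k)

/-- The idempotent endomorphism of `V_n` given by the partial identity on `S`. -/
noncomputable def EI {n : ℕ} (S : Finset (Fin n)) : Module.End k (V.obj n) :=
  V.map (pId S)

theorem EI_mul {n : ℕ} (S T : Finset (Fin n)) : EI V S * EI V T = EI V (S ∩ T) := by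
  show (V.map (pId S)).comp (V.map (pId T)) = V.map (pId (S ∩ T))
  rw [← V.map_comp, pId_comp_pId]

theorem EI_univ {n : ℕ} : EI V (univ : Finset (Fin n)) = 1 := by
  show V.map (pId univ) = 1
  rw [pId_univ, V.map_id]; rfl

/-- The codimension-one idempotent deleting the coordinate `j`. -/
noncomputable def Q {n : ℕ} (j : Fin n) : Module.End k (V.obj n) := EI V ({j}ᶜ)

theorem Q_comm {n : ℕ} (i j : Fin n) : Q V i * Q V j = Q V j * Q V i := by
  unfold Q; rw [EI_mul, EI_mul, inter_comm]

theorem Q_idem {n : ℕ} (j : Fin n) : Q V j * Q V j = Q V j := by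
  unfold Q; rw [EI_mul, inter_self]

/-- The commutative subalgebra of `End (V_n)` generated by the `Q j`. -/
noncomputable def AA (n : ℕ) : Subalgebra k (Module.End k (V.obj n)) :=
  Algebra.adjoin k (Set.range (fun j : Fin n => Q V j))

noncomputable instance (n : ℕ) : CommRing (AA V n) :=
  { (inferInstance : Ring (AA V n)) with
    mul_comm := (Algebra.adjoinCommRingOfComm k (by
    rintro a ⟨i, rfl⟩ b ⟨j, rfl⟩
    exact Q_comm V i j)).mul_comm }

/-- `Q j` as an element of the commutative subalgebra. -/
noncomputable def qa {n : ℕ} (j : Fin n) : AA V n :=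
  ⟨Q V j, Algebra.subset_adjoin ⟨j, rfl⟩⟩

theorem qa_idem {n : ℕ} (j : Fin n) : qa V j * qa V j = qa V j :=
  Subtype.ext (Q_idem V j)

theorem one_sub_qa_mul_qa {n : ℕ} (j : Fin n) : (1 - qa V j) * qa V j = 0 := by
  rw [sub_mul, one_mul, qa_idem, sub_self]

theorem prodQ_val {n : ℕ} (t : Finset (Fin n)) :
    ((∏ i ∈ t, qa V i : AA V n) : Module.End k (V.obj n)) = EI V tᶜ := by
  induction t using Finset.induction_on with
  | empty => simp [EI_univ]
  | @insert j t hj ih =>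
    rw [Finset.prod_insert hj]
    push_cast
    rw [ih]
    show Q V j * EI V tᶜ = _
    rw [Q, EI_mul]
    congr 1
    ext i
    simp [Finset.mem_compl, Finset.mem_insert, not_or, and_comm]

/-- The partial identity on `S` as an element of the commutative subalgebra. -/
noncomputable def ea {n : ℕ} (S : Finset (Fin n)) : AA V n := ∏ i ∈ Sᶜ, qa V i

theorem ea_val {n : ℕ} (S : Finset (Fin n)) :
    ((ea V S : AA V n) : Module.End k (V.obj n)) = EI V S := by
  rw [ea, prodQ_val, compl_compl]

theorem ea_idem {n : ℕ} (S : Finset (Fin n)) : ea V S * ea V S = ea V S := by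
  rw [ea, ← Finset.prod_mul_distrib]
  exact Finset.prod_congr rfl fun i _ => qa_idem V i

/-- The family of orthogonal idempotents, inside the commutative subalgebra. -/
noncomputable def εa {n : ℕ} (S : Finset (Fin n)) : AA V n :=
  (∏ i ∈ S, (1 - qa V i)) * ea V S

theorem sum_εa {n : ℕ} : ∑ S : Finset (Fin n), εa V S = 1 := by
  have h := Finset.prod_add (fun i : Fin n => 1 - qa V i) (fun i : Fin n => qa V i) univ
  simp only [sub_add_cancel, Finset.prod_const_one] at h
  rw [← Finset.powerset_univ, h]
  exact Finset.sum_congr rfl fun S _ => by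
    rw [εa, ea, Finset.compl_eq_univ_sdiff]

theorem εa_mul_εa_of_ne {n : ℕ} {S T : Finset (Fin n)} (hST : S ≠ T) :
    εa V S * εa V T = 0 := by
  have key : ∀ (S T : Finset (Fin n)) (i : Fin n), i ∈ S → i ∉ T →
      εa V S * εa V T = 0 := by
    intro S T i hiS hiT
    obtain ⟨c, hc⟩ : (1 - qa V i) ∣ εa V S :=
      dvd_mul_of_dvd_left (Finset.dvd_prod_of_mem _ hiS) _
    obtain ⟨d, hd⟩ : qa V i ∣ εa V T :=
      dvd_mul_of_dvd_right (Finset.dvd_prod_of_mem _ (Finset.mem_compl.mpr hiT)) _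
    rw [hc, hd]
    have : (1 - qa V i) * c * (qa V i * d) = ((1 - qa V i) * qa V i) * (c * d) := by ring
    rw [this, one_sub_qa_mul_qa, zero_mul]
  have hne : ¬ (S ⊆ T ∧ T ⊆ S) := fun hb => hST (Finset.Subset.antisymm hb.1 hb.2)
  rw [not_and_or] at hne
  rcases hne with hsub | hsub
  · obtain ⟨i, hiS, hiT⟩ := Finset.not_subset.mp hsub
    exact key S T i hiS hiT
  · obtain ⟨i, hiT, hiS⟩ := Finset.not_subset.mp hsub
    rw [mul_comm]
    exact key T S i hiT hiS

theorem qa_mul_εa_of_mem {n : ℕ} {S : Finset (Fin n)} {i : Fin n} (hi : i ∈ S) :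
    qa V i * εa V S = 0 := by
  obtain ⟨c, hc⟩ : (1 - qa V i) ∣ εa V S :=
    dvd_mul_of_dvd_left (Finset.dvd_prod_of_mem _ hi) _
  rw [hc, ← mul_assoc, mul_comm (qa V i), one_sub_qa_mul_qa, zero_mul]

theorem εa_mul_ea {n : ℕ} (S : Finset (Fin n)) : εa V S * ea V S = εa V S := by
  rw [εa, mul_assoc, ea_idem]

theorem εa_idem {n : ℕ} (S : Finset (Fin n)) : εa V S * εa V S = εa V S := by
  conv_rhs => rw [← mul_one (εa V S), ← sum_εa V (n := n)]
  rw [Finset.mul_sum]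
  rw [Finset.sum_eq_single S
    (fun T _ hT => εa_mul_εa_of_ne V (Ne.symm hT)) (fun hc => absurd (Finset.mem_univ S) hc)]

/-- The orthogonal idempotent attached to `S`, as an endomorphism of `V_n`. -/
noncomputable def εE {n : ℕ} (S : Finset (Fin n)) : Module.End k (V.obj n) :=
  (εa V S : Module.End k (V.obj n))

theorem sum_εE_apply {n : ℕ} (x : V.obj n) : ∑ S : Finset (Fin n), εE V S x = x := by
  have h := congrArg (Subtype.val) (sum_εa V (n := n))
  rw [AddSubmonoidClass.coe_finset_sum] at h
  have h2 := congrArg (fun g : Module.End k (V.obj n) => g x) h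
  simpa [εE] using h2

theorem εE_orth {n : ℕ} {S T : Finset (Fin n)} (hST : S ≠ T) :
    εE V S * εE V T = 0 := by
  have h := congrArg (Subtype.val) (εa_mul_εa_of_ne V hST)
  simpa [εE] using h

theorem εE_idem {n : ℕ} (S : Finset (Fin n)) : εE V S * εE V S = εE V S := by
  have h := congrArg (Subtype.val) (εa_idem V S)
  simpa [εE] using h

/-! ### The top idempotent and the modules `W a` -/

noncomputable def Etopa (n : ℕ) : AA V n := ∏ i : Fin n, (1 - qa V i)

noncomputable def EtopE (n : ℕ) : Module.End k (V.obj n) :=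
  (Etopa V n : Module.End k (V.obj n))

/-- The submodule of totally new elements of `V_a`. -/
noncomputable def W (a : ℕ) : Submodule k (V.obj a) :=
  ⨅ j : Fin a, LinearMap.ker (Q V j)

theorem mem_W_iff {a : ℕ} {x : V.obj a} : x ∈ W V a ↔ ∀ j : Fin a, Q V j x = 0 := by
  simp [W, Submodule.mem_iInf, LinearMap.mem_ker]

theorem prod_one_sub_qa_apply_of_mem_W {a : ℕ} (t : Finset (Fin a)) {x : V.obj a}
    (hx : x ∈ W V a) :
    ((∏ i ∈ t, (1 - qa V i) : AA V a) : Module.End k (V.obj a)) x = x := by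
  induction t using Finset.induction_on with
  | empty => simp
  | @insert j t hj ih =>
    rw [Finset.prod_insert hj, MulMemClass.coe_mul, Module.End.mul_apply, ih]
    have : ((1 - qa V j : AA V a) : Module.End k (V.obj a)) x = x - Q V j x := by
      simp [qa]
    rw [this, (mem_W_iff V).mp hx j, sub_zero]

theorem EtopE_apply_of_mem_W {a : ℕ} {x : V.obj a} (hx : x ∈ W V a) :
    EtopE V a x = x :=
  prod_one_sub_qa_apply_of_mem_W V univ hx

theorem qa_mul_Etopa {n : ℕ} (j : Fin n) : qa V j * Etopa V n = 0 := by
  rw [Etopa, ← Finset.mul_prod_erase _ _ (Finset.mem_univ j), ← mul_assoc,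
    mul_comm (qa V j), one_sub_qa_mul_qa, zero_mul]

theorem EtopE_mem_W {n : ℕ} (x : V.obj n) : EtopE V n x ∈ W V n := by
  rw [mem_W_iff]
  intro j
  have h := congrArg (Subtype.val) (qa_mul_Etopa V j)
  have h2 := congrArg (fun g : Module.End k (V.obj n) => g x) h
  simpa [EtopE, qa] using h2

theorem EtopE_comp_emb_eq_zero {a n : ℕ} (f : Fin a ↪ Fin n) (j : Fin n)
    (hj : ∀ i, f i ≠ j) :
    (EtopE V n).comp (V.map (embToPartial f)) = 0 := by
  have hfac : Etopa V n = (∏ i ∈ univ.erase j, (1 - qa V i)) * (1 - qa V j) := by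
    rw [Etopa, Finset.prod_erase_mul _ _ (Finset.mem_univ j)]
  have hQ : (Q V j).comp (V.map (embToPartial f)) = V.map (embToPartial f) := by
    show (V.map (pId ({j}ᶜ))).comp (V.map (embToPartial f)) = _
    rw [← V.map_comp, pDel_comp_emb f j hj]
  have h1 : ((1 - qa V j : AA V n) : Module.End k (V.obj n)).comp
      (V.map (embToPartial f)) = 0 := by
    have : ((1 - qa V j : AA V n) : Module.End k (V.obj n))
        = 1 - Q V j := by simp [qa]
    rw [this, LinearMap.sub_comp, Module.End.one_eq_id, LinearMap.id_comp, hQ, sub_self]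
  rw [EtopE, hfac, MulMemClass.coe_mul, Module.End.mul_eq_comp, LinearMap.comp_assoc, h1,
    LinearMap.comp_zero]

/-! ### The decomposition attached to a subset `S` of `[n]` -/

section Decomp

variable {n a : ℕ} (S : Finset (Fin n)) (hS : S.card = a)

/-- The order embedding of `Fin S.card` onto `S`. -/
noncomputable def fE : Fin a ↪ Fin n := (S.orderEmbOfFin hS).toEmbedding

theorem fE_mem (i : Fin a) : fE S hS i ∈ S := S.orderEmbOfFin_mem hS i

theorem image_univ_fE : univ.image (fE S hS) = S := by
  apply Finset.coe_injective
  rw [Finset.coe_image, Finset.coe_univ, Set.image_univ]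
  exact S.range_orderEmbOfFin hS

/-- Inclusion of `V_a` into `V_n` along `S`. -/
noncomputable def Fm : V.obj a →ₗ[k] V.obj n := V.map (embToPartial (fE S hS))

/-- Projection of `V_n` onto `V_a` along `S`. -/
noncomputable def Gm : V.obj n →ₗ[k] V.obj a := V.map (pInv (fE S hS))

theorem Gm_comp_Fm : (Gm V S hS).comp (Fm V S hS) = LinearMap.id := by
  rw [Gm, Fm, ← V.map_comp, pInv_comp_emb, V.map_id]

theorem Fm_comp_Gm : (Fm V S hS).comp (Gm V S hS) = EI V S := by
  rw [Gm, Fm, ← V.map_comp, emb_comp_pInv, image_univ_fE]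
  rfl

theorem EI_comp_εE : (EI V S).comp (εE V S) = εE V S := by
  have hA : ea V S * εa V S = εa V S := by rw [mul_comm]; exact εa_mul_ea V S
  have h := congrArg (Subtype.val) hA
  rw [MulMemClass.coe_mul, ea_val] at h
  rw [← Module.End.mul_eq_comp]
  exact h

theorem εE_eq_Fm_Gm_εE : εE V S = (Fm V S hS).comp ((Gm V S hS).comp (εE V S)) := by
  rw [← LinearMap.comp_assoc, Fm_comp_Gm, EI_comp_εE]

theorem Q_comp_Gm (j : Fin a) :
    (Q V j).comp (Gm V S hS) = (Gm V S hS).comp (Q V (fE S hS j)) := by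
  show (V.map (pId ({j}ᶜ))).comp (V.map (pInv (fE S hS)))
      = (V.map (pInv (fE S hS))).comp (V.map (pId ({fE S hS j}ᶜ)))
  rw [← V.map_comp, ← V.map_comp, pDel_comp_pInv]

theorem Gm_εE_mem_W (x : V.obj n) : Gm V S hS (εE V S x) ∈ W V a := by
  rw [mem_W_iff]
  intro j
  have h1 : Q V j (Gm V S hS (εE V S x)) = Gm V S hS (Q V (fE S hS j) (εE V S x)) := by
    have := congrArg (fun g : V.obj n →ₗ[k] V.obj a => g (εE V S x)) (Q_comp_Gm V S hS j)
    simpa using this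
  have h2 : (Q V (fE S hS j)) * (εE V S) = 0 := by
    have h := congrArg (Subtype.val) (qa_mul_εa_of_mem V (fE_mem S hS j))
    simpa [εE, qa] using h
  have h3 : Q V (fE S hS j) (εE V S x) = 0 := by
    have := congrArg (fun g : Module.End k (V.obj n) => g x) h2
    simpa using this
  rw [h1, h3, map_zero]

theorem comm_through_Gm (t : Finset (Fin a)) :
    (Gm V S hS).comp ((∏ i ∈ t.image (fE S hS), (1 - qa V i) : AA V n) :
        Module.End k (V.obj n))
      = (((∏ j ∈ t, (1 - qa V j) : AA V a) :
        Module.End k (V.obj a))).comp (Gm V S hS) := by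
  induction t using Finset.induction_on with
  | empty => simp [Module.End.one_eq_id]
  | @insert j t hj ih =>
    have hjim : fE S hS j ∉ t.image (fE S hS) := by
      rw [Finset.mem_image]
      rintro ⟨i, hi, hfi⟩
      exact hj (((fE S hS).injective hfi) ▸ hi)
    have swap : (Gm V S hS).comp
          ((1 - qa V (fE S hS j) : AA V n) : Module.End k (V.obj n))
        = ((1 - qa V j : AA V a) : Module.End k (V.obj a)).comp (Gm V S hS) := by
      have e1 : ((1 - qa V (fE S hS j) : AA V n) : Module.End k (V.obj n))
          = 1 - Q V (fE S hS j) := by simp [qa]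
      have e2 : ((1 - qa V j : AA V a) : Module.End k (V.obj a)) = 1 - Q V j := by
        simp [qa]
      rw [e1, e2, LinearMap.comp_sub, LinearMap.sub_comp, Q_comp_Gm V S hS j]
      simp [Module.End.one_eq_id]
    rw [Finset.image_insert, Finset.prod_insert hjim, Finset.prod_insert hj,
      MulMemClass.coe_mul, MulMemClass.coe_mul, Module.End.mul_eq_comp,
      Module.End.mul_eq_comp]
    calc (Gm V S hS).comp
          (((1 - qa V (fE S hS j) : AA V n) : Module.End k (V.obj n)).comp
            ((∏ x ∈ t.image (fE S hS), (1 - qa V x) : AA V n) : Module.End k (V.obj n)))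
        = ((Gm V S hS).comp
            ((1 - qa V (fE S hS j) : AA V n) : Module.End k (V.obj n))).comp
            ((∏ x ∈ t.image (fE S hS), (1 - qa V x) : AA V n) : Module.End k (V.obj n)) := by
          rw [LinearMap.comp_assoc]
      _ = (((1 - qa V j : AA V a) : Module.End k (V.obj a)).comp (Gm V S hS)).comp
            ((∏ x ∈ t.image (fE S hS), (1 - qa V x) : AA V n) : Module.End k (V.obj n)) := by
          rw [swap]
      _ = ((1 - qa V j : AA V a) : Module.End k (V.obj a)).comp
            ((Gm V S hS).comp
              ((∏ x ∈ t.image (fE S hS), (1 - qa V x) : AA V n) : Module.End k (V.obj n))) := by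
          rw [LinearMap.comp_assoc]
      _ = ((1 - qa V j : AA V a) : Module.End k (V.obj a)).comp
            (((∏ x ∈ t, (1 - qa V x) : AA V a) : Module.End k (V.obj a)).comp
              (Gm V S hS)) := by rw [ih]
      _ = (((1 - qa V j : AA V a) : Module.End k (V.obj a)).comp
            ((∏ x ∈ t, (1 - qa V x) : AA V a) : Module.End k (V.obj a))).comp
              (Gm V S hS) := by rw [LinearMap.comp_assoc]

theorem EI_comp_Fm : (EI V S).comp (Fm V S hS) = Fm V S hS := by
  show (V.map (pId S)).comp (V.map (embToPartial (fE S hS))) = _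
  rw [← V.map_comp, pId_comp_emb _ _ (fE_mem S hS)]
  rfl

theorem Gm_comp_εE_comp_Fm :
    ((Gm V S hS).comp ((εE V S).comp (Fm V S hS))) = EtopE V a := by
  have hεF : (εE V S).comp (Fm V S hS)
      = (((∏ i ∈ S, (1 - qa V i) : AA V n) : Module.End k (V.obj n))).comp
          (Fm V S hS) := by
    show ((εa V S : AA V n) : Module.End k (V.obj n)).comp _ = _
    rw [εa, MulMemClass.coe_mul, ea_val, Module.End.mul_eq_comp, LinearMap.comp_assoc,
      EI_comp_Fm]
  have hcomm := comm_through_Gm V S hS univ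
  rw [image_univ_fE] at hcomm
  rw [hεF, ← LinearMap.comp_assoc, hcomm, LinearMap.comp_assoc, Gm_comp_Fm,
    LinearMap.comp_id]
  rfl

theorem Gm_εE_Fm {w : V.obj a} (hw : w ∈ W V a) :
    Gm V S hS (εE V S (Fm V S hS w)) = w := by
  have := congrArg (fun g : V.obj a →ₗ[k] V.obj a => g w) (Gm_comp_εE_comp_Fm V S hS)
  simp only [LinearMap.comp_apply] at this
  rw [this, EtopE_apply_of_mem_W V hw]

end Decomp

theorem sum_εE {n : ℕ} : ∑ S : Finset (Fin n), εE V S = 1 := by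
  have h := congrArg (Subtype.val) (sum_εa V (n := n))
  rw [AddSubmonoidClass.coe_finset_sum] at h
  simpa [εE] using h

section PiEquiv

variable {M : Type} [AddCommGroup M] [Module k M] {ι : Type} [Fintype ι] [DecidableEq ι]

theorem idem_of_sum_orth (ε : ι → Module.End k M) (hsum : ∑ i, ε i = 1)
    (horth : ∀ i j, i ≠ j → ε i * ε j = 0) (j : ι) : ε j * ε j = ε j := by
  conv_rhs => rw [← mul_one (ε j), ← hsum]
  rw [Finset.mul_sum, Finset.sum_eq_single j
    (fun i _ hij => horth j i (Ne.symm hij)) (fun hc => absurd (Finset.mem_univ j) hc)]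

/-- Decomposition of a module along a complete family of orthogonal idempotents. -/
noncomputable def piEquivOfIdem (ε : ι → Module.End k M) (hsum : ∑ i, ε i = 1)
    (horth : ∀ i j, i ≠ j → ε i * ε j = 0) :
    M ≃ₗ[k] Π i, LinearMap.range (ε i) where
  toFun x := fun i => ⟨ε i x, LinearMap.mem_range_self _ x⟩
  map_add' x y := by funext i; apply Subtype.ext; simp
  map_smul' c x := by funext i; apply Subtype.ext; simp
  invFun g := ∑ i, (g i : M)
  left_inv x := by
    have h := congrArg (fun g : Module.End k M => g x) hsum
    simpa using h
  right_inv g := by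
    funext j
    apply Subtype.ext
    show ε j (∑ i, (g i : M)) = g j
    rw [map_sum]
    have hterm : ∀ i : ι, ε j ((g i : M)) = if i = j then (g j : M) else 0 := by
      intro i
      obtain ⟨y, hy⟩ := (g i).2
      by_cases hij : i = j
      · subst hij
        rw [if_pos rfl, ← hy]
        have := congrArg (fun f : Module.End k M => f y)
          (idem_of_sum_orth ε hsum horth i)
        simpa using this
      · rw [if_neg hij, ← hy]
        have := congrArg (fun f : Module.End k M => f y) (horth j i (Ne.symm hij))
        simpa using this
    rw [Finset.sum_congr rfl (fun i _ => hterm i), Finset.sum_ite_eq' univ j]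
    simp

end PiEquiv

/-- The decomposition of `V_n` along the idempotents `εE S`. -/
noncomputable def decompEquiv (n : ℕ) :
    V.obj n ≃ₗ[k] Π S : Finset (Fin n), LinearMap.range (εE V S) :=
  piEquivOfIdem (fun S => εE V S) (sum_εE V) (fun _ _ h => εE_orth V h)

theorem εE_apply_of_mem_range {n : ℕ} {S : Finset (Fin n)} {x : V.obj n}
    (hx : x ∈ LinearMap.range (εE V S)) : εE V S x = x := by
  obtain ⟨y, hy⟩ := hx
  have h := congrArg (fun f : Module.End k (V.obj n) => f y)
    (idem_of_sum_orth (fun S => εE V S) (sum_εE V) (fun _ _ h => εE_orth V h) S)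
  rw [← hy]
  simpa using h

/-- The range of `εE S` is a copy of `W (#S)`. -/
noncomputable def rangeEquivW {n a : ℕ} (S : Finset (Fin n)) (hS : S.card = a) :
    LinearMap.range (εE V S) ≃ₗ[k] W V a where
  toFun x := ⟨Gm V S hS (εE V S x), Gm_εE_mem_W V S hS x⟩
  map_add' x y := by apply Subtype.ext; simp
  map_smul' c x := by apply Subtype.ext; simp
  invFun w := ⟨εE V S (Fm V S hS w), LinearMap.mem_range_self _ _⟩
  left_inv x := by
    apply Subtype.ext
    show εE V S (Fm V S hS (Gm V S hS (εE V S (x : V.obj n)))) = (x : V.obj n)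
    have h1 : Fm V S hS (Gm V S hS (εE V S (x : V.obj n)))
        = EI V S (εE V S (x : V.obj n)) := by
      have := congrArg (fun f : V.obj n →ₗ[k] V.obj n => f (εE V S (x : V.obj n)))
        (Fm_comp_Gm V S hS)
      simpa using this
    have h2 : EI V S (εE V S (x : V.obj n)) = εE V S (x : V.obj n) := by
      have := congrArg (fun f : V.obj n →ₗ[k] V.obj n => f (x : V.obj n))
        (EI_comp_εE V S)
      simpa using this
    rw [h1, h2, εE_apply_of_mem_range V (LinearMap.mem_range_self _ _),
      εE_apply_of_mem_range V x.2]
  right_inv w := by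
    apply Subtype.ext
    show Gm V S hS (εE V S (εE V S (Fm V S hS (w : V.obj a)))) = (w : V.obj a)
    rw [εE_apply_of_mem_range V (LinearMap.mem_range_self _ _)]
    exact Gm_εE_Fm V S hS w.2

/-- The projection of `V_n` onto the product of the copies of `W a`. -/
noncomputable def projW (n a : ℕ) :
    V.obj n →ₗ[k] ({S : Finset (Fin n) // S.card = a} → W V a) where
  toFun x := fun S => ⟨Gm V S.1 S.2 (εE V S.1 x), Gm_εE_mem_W V S.1 S.2 x⟩
  map_add' x y := by funext S; apply Subtype.ext; simp
  map_smul' c x := by funext S; apply Subtype.ext; simp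

theorem projW_surjective (n a : ℕ) : Function.Surjective (projW V n a) := by
  intro g
  refine ⟨∑ S : {S : Finset (Fin n) // S.card = a}, εE V S.1 (Fm V S.1 S.2 (g S)), ?_⟩
  funext T
  apply Subtype.ext
  show Gm V T.1 T.2 (εE V T.1 _) = (g T : V.obj a)
  rw [map_sum, map_sum]
  have hterm : ∀ S : {S : Finset (Fin n) // S.card = a},
      εE V T.1 (εE V S.1 (Fm V S.1 S.2 (g S)))
        = if S = T then εE V T.1 (Fm V T.1 T.2 (g T)) else 0 := by
    intro S
    by_cases hST : S = T
    · subst hST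
      rw [if_pos rfl, εE_apply_of_mem_range V (LinearMap.mem_range_self _ _)]
    · rw [if_neg hST]
      have hne : T.1 ≠ S.1 := fun hc => hST (Subtype.ext hc.symm)
      have := congrArg (fun f : Module.End k (V.obj n) => f (Fm V S.1 S.2 (g S)))
        (εE_orth V hne)
      simpa using this
  rw [Finset.sum_congr rfl (fun S _ => congrArg _ (hterm S))]
  simp only [apply_ite (Gm V T.1 T.2), map_zero]
  rw [Finset.sum_ite_eq' univ T]
  simp only [Finset.mem_univ, if_pos]
  rw [Gm_εE_Fm V T.1 T.2 (g T).2]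


/-! ### Finite generation of FI-modules -/

section FG

variable (M : FIModule k)

/-- The degrees-`≤ d` part of the span of an FI-module. -/
def SpanLE (d n : ℕ) : Submodule k (M.obj n) :=
  Submodule.span k
    {x | ∃ m, m ≤ d ∧ ∃ f : Fin m ↪ Fin n, ∃ y : M.obj m, M.map f y = x}

theorem map_spanLE {d m n : ℕ} (f : Fin m ↪ Fin n) {x : M.obj m}
    (hx : x ∈ SpanLE M d m) : M.map f x ∈ SpanLE M d n := by
  have h1 : M.map f x ∈ (SpanLE M d m).map (M.map f) := Submodule.mem_map_of_mem hx
  rw [SpanLE, Submodule.map_span] at h1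
  refine Submodule.span_le.mpr ?_ h1
  rintro z ⟨y, ⟨m', hm', g, w, rfl⟩, rfl⟩
  apply Submodule.subset_span
  exact ⟨m', hm', g.trans f, w, by rw [M.map_comp]; rfl⟩

/-- The sub-FI-module generated by everything in degrees `≤ d`. -/
def spanSubFI (d : ℕ) : SubFI M where
  carrier n := SpanLE M d n
  map_mem f _ hx := map_spanLE M f hx

theorem generatedLE_iff_spanLE {d : ℕ} :
    M.GeneratedInDegreeLE d ↔ ∀ n, SpanLE M d n = ⊤ := by
  constructor
  · intro h n
    rw [Submodule.eq_top_iff']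
    intro x
    refine h (spanSubFI M d) ?_ n x
    intro m hm y
    apply Submodule.subset_span
    exact ⟨m, hm, Embedding.refl (Fin m), y, by rw [M.map_id]; rfl⟩
  · intro h N hN n x
    have hx : x ∈ SpanLE M d n := by rw [h n]; trivial
    refine Submodule.span_le.mpr ?_ hx
    rintro z ⟨m, hm, f, y, rfl⟩
    exact N.map_mem f (hN m hm y)

/-- The sub-FI-module generated by a finite set of elements. -/
def genSubFI (G : Finset (Σ n : ℕ, M.obj n)) : SubFI M where
  carrier n := Submodule.span k
    {x | ∃ s ∈ G, ∃ f : Fin s.1 ↪ Fin n, M.map f s.2 = x}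
  map_mem {m n} f {x} hx := by
    have h1 : M.map f x ∈ Submodule.map (M.map f)
        (Submodule.span k {x | ∃ s ∈ G, ∃ g : Fin s.1 ↪ Fin m, M.map g s.2 = x}) :=
      Submodule.mem_map_of_mem hx
    rw [Submodule.map_span] at h1
    refine Submodule.span_le.mpr ?_ h1
    rintro z ⟨y, ⟨s, hs, g, rfl⟩, rfl⟩
    apply Submodule.subset_span
    exact ⟨s, hs, g.trans f, by rw [M.map_comp]; rfl⟩

theorem fg_iff :
    M.FinitelyGenerated ↔
      (∀ n, Module.Finite k (M.obj n)) ∧ ∃ d, M.GeneratedInDegreeLE d := by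
  constructor
  · rintro ⟨G, hG⟩
    constructor
    · intro n
      have htop := hG (genSubFI M G)
        (fun s hs => Submodule.subset_span
          ⟨s, hs, Embedding.refl _, by rw [M.map_id]; rfl⟩) n
      have hfin : Set.Finite {x | ∃ s ∈ G, ∃ f : Fin s.1 ↪ Fin n, M.map f s.2 = x} := by
        have : {x | ∃ s ∈ G, ∃ f : Fin s.1 ↪ Fin n, M.map f s.2 = x}
            = ⋃ s ∈ G, Set.range (fun f : Fin s.1 ↪ Fin n => M.map f s.2) := by
          ext x
          simp [Set.mem_iUnion, eq_comm]
        rw [this]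
        exact Set.Finite.biUnion G.finite_toSet (fun s _ => Set.finite_range _)
      rw [Module.finite_def, Submodule.fg_def]
      refine ⟨_, hfin, ?_⟩
      rw [Submodule.eq_top_iff']
      intro x
      exact htop x
    · refine ⟨G.sup (fun s => s.1), ?_⟩
      intro N hN n x
      refine hG N (fun s hs => hN s.1 (Finset.le_sup hs) s.2) n x
  · rintro ⟨hfin, d, hgen⟩
    classical
    have ht : ∀ m, ∃ t : Finset (M.obj m), Submodule.span k (↑t : Set (M.obj m)) = ⊤ :=
      fun m => Module.finite_def.mp (hfin m)
    choose t htt using ht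
    refine ⟨(Finset.range (d+1)).biUnion
      (fun m => (t m).image (fun y => (⟨m, y⟩ : Σ n, M.obj n))), ?_⟩
    intro N hN n x
    refine hgen N ?_ n x
    intro m hm y
    have hle : Submodule.span k (↑(t m) : Set (M.obj m)) ≤ N.carrier m := by
      rw [Submodule.span_le]
      intro z hz
      exact hN ⟨m, z⟩ (Finset.mem_biUnion.mpr
        ⟨m, Finset.mem_range.mpr (Nat.lt_succ_of_le hm),
          Finset.mem_image.mpr ⟨z, hz, rfl⟩⟩)
    rw [htt m] at hle
    exact hle trivial

theorem spanning_card_of_fg (hfg : M.FinitelyGenerated) :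
    ∃ C d : ℕ, ∀ n : ℕ, ∃ s : Finset (M.obj n),
      Submodule.span k (s : Set (M.obj n)) = ⊤ ∧ s.card ≤ C * (n + 1) ^ d := by
  classical
  obtain ⟨hfin, d, hgen⟩ := (fg_iff M).mp hfg
  have ht : ∀ m, ∃ t : Finset (M.obj m), Submodule.span k (↑t : Set (M.obj m)) = ⊤ :=
    fun m => Module.finite_def.mp (hfin m)
  choose t htt using ht
  refine ⟨∑ m ∈ Finset.range (d+1), (t m).card, d, ?_⟩
  intro n
  refine ⟨(Finset.range (d+1)).biUnion
    (fun m => ((t m) ×ˢ (univ : Finset (Fin m ↪ Fin n))).image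
      (fun p => M.map p.2 p.1)), ?_, ?_⟩
  · rw [← top_le_iff, ← (generatedLE_iff_spanLE M).mp hgen n, SpanLE, Submodule.span_le]
    rintro x ⟨m, hm, f, y, rfl⟩
    have hy : y ∈ Submodule.span k (↑(t m) : Set (M.obj m)) := by rw [htt m]; trivial
    have h1 : M.map f y ∈ Submodule.map (M.map f)
        (Submodule.span k (↑(t m) : Set (M.obj m))) := Submodule.mem_map_of_mem hy
    rw [Submodule.map_span] at h1
    refine Submodule.span_le.mpr ?_ h1
    rintro z ⟨w, hw, rfl⟩
    apply Submodule.subset_span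
    apply Finset.mem_coe.mpr
    refine Finset.mem_biUnion.mpr ⟨m, Finset.mem_range.mpr (Nat.lt_succ_of_le hm), ?_⟩
    exact Finset.mem_image.mpr ⟨(w, f), Finset.mem_product.mpr ⟨hw, Finset.mem_univ f⟩, rfl⟩
  · refine (Finset.card_biUnion_le).trans ?_
    rw [Finset.sum_mul]
    apply Finset.sum_le_sum
    intro m hm
    refine (Finset.card_image_le).trans ?_
    rw [Finset.card_product]
    apply Nat.mul_le_mul_left
    have h1 : (univ : Finset (Fin m ↪ Fin n)).card ≤ n ^ m := by
      rw [Finset.card_univ]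
      calc Fintype.card (Fin m ↪ Fin n)
          ≤ Fintype.card (Fin m → Fin n) :=
            Fintype.card_le_of_injective _ DFunLike.coe_injective
        _ = n ^ m := by simp [Fintype.card_fun]
    refine h1.trans ?_
    calc n ^ m ≤ (n+1) ^ m := Nat.pow_le_pow_left (Nat.le_succ n) m
      _ ≤ (n+1) ^ d := Nat.pow_le_pow_right (Nat.succ_le_succ (Nat.zero_le n))
          (Finset.mem_range.mp hm |> Nat.lt_succ_iff.mp)

theorem fg_of_spanning (hfin : ∀ n, Module.Finite k (M.obj n))
    {d : ℕ} (hgen : M.GeneratedInDegreeLE d) : M.FinitelyGenerated :=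
  (fg_iff M).mpr ⟨hfin, d, hgen⟩

end FG

/-! ### The two key lemmas relating generation degree and the modules `W a` -/

theorem W_eq_bot_of_generatedLE {d : ℕ} (hgen : V.toFI.GeneratedInDegreeLE d)
    {a : ℕ} (ha : d < a) : W V a = ⊥ := by
  rw [eq_bot_iff]
  intro x hx
  have h1 : EtopE V a x = x := EtopE_apply_of_mem_W V hx
  have h2 : x ∈ SpanLE V.toFI d a := by
    rw [(generatedLE_iff_spanLE V.toFI).mp hgen a]; trivial
  have h3 : SpanLE V.toFI d a ≤ LinearMap.ker (EtopE V a) := by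
    refine Submodule.span_le.mpr ?_
    rintro z ⟨m, hm, f, y, rfl⟩
    have hnotsurj : ∃ j : Fin a, ∀ i, f i ≠ j := by
      by_contra hc
      push_neg at hc
      have hsurj : Function.Surjective f := fun j => by
        obtain ⟨i, hi⟩ := hc j; exact ⟨i, hi⟩
      have := Fintype.card_le_of_surjective f hsurj
      simp only [Fintype.card_fin] at this
      omega
    obtain ⟨j, hj⟩ := hnotsurj
    have h0 := EtopE_comp_emb_eq_zero V f j hj
    have := congrArg (fun g : V.obj m →ₗ[k] V.obj a => g y) h0
    exact this
  have h4 : EtopE V a x = 0 := h3 h2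
  rw [h1] at h4
  simp [h4]

theorem generatedLE_of_W {d : ℕ} (hW : ∀ a, d < a → W V a = ⊥) :
    V.toFI.GeneratedInDegreeLE d := by
  rw [generatedLE_iff_spanLE]
  intro n
  rw [Submodule.eq_top_iff']
  intro x
  have hx : x = ∑ S : Finset (Fin n), εE V S x := (sum_εE_apply V x).symm
  rw [hx]
  apply Submodule.sum_mem
  intro S _
  have hdecomp := congrArg (fun g : V.obj n →ₗ[k] V.obj n => g x)
    (εE_eq_Fm_Gm_εE V S rfl)
  change εE V S x = Fm V S rfl (Gm V S rfl (εE V S x)) at hdecomp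
  by_cases hcard : S.card ≤ d
  · rw [hdecomp]
    apply Submodule.subset_span
    exact ⟨S.card, hcard, fE S rfl, Gm V S rfl (εE V S x), rfl⟩
  · have hWz : Gm V S rfl (εE V S x) = 0 := by
      have := Gm_εE_mem_W V S rfl x
      rw [hW S.card (lt_of_not_ge hcard)] at this
      simpa using this
    rw [hdecomp, hWz, map_zero]
    exact Submodule.zero_mem _


section Field

variable {K : Type} [Field K] (VK : FIsharpModule K)

theorem finrank_eq_sum_choose (hfin : ∀ m, Module.Finite K (VK.obj m)) (n : ℕ) :
    Module.finrank K (VK.obj n)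
      = ∑ a ∈ Finset.range (n+1), n.choose a * Module.finrank K (W VK a) := by
  haveI : ∀ m, Module.Finite K (VK.obj m) := hfin
  have h1 : Module.finrank K (VK.obj n)
      = Module.finrank K (Π S : Finset (Fin n), LinearMap.range (εE VK S)) :=
    (decompEquiv VK n).finrank_eq
  have h2 : Module.finrank K (Π S : Finset (Fin n), LinearMap.range (εE VK S))
      = ∑ S : Finset (Fin n), Module.finrank K (LinearMap.range (εE VK S)) :=
    Module.finrank_pi_fintype K
  have h3 : ∀ S : Finset (Fin n), Module.finrank K (LinearMap.range (εE VK S))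
      = Module.finrank K (W VK S.card) :=
    fun S => (rangeEquivW VK S rfl).finrank_eq
  rw [h1, h2, Finset.sum_congr rfl (fun S _ => h3 S)]
  have h4 : ∑ S : Finset (Fin n), Module.finrank K (W VK S.card)
      = ∑ S ∈ (Finset.univ : Finset (Fin n)).powerset,
          Module.finrank K (W VK S.card) := by
    rw [Finset.powerset_univ]
  rw [h4, Finset.sum_powerset]
  have hcard : (Finset.univ : Finset (Fin n)).card = n := by simp
  rw [hcard]
  apply Finset.sum_congr rfl
  intro a _
  have h5 : ∀ S ∈ Finset.powersetCard a (Finset.univ : Finset (Fin n)),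
      Module.finrank K (W VK S.card) = Module.finrank K (W VK a) := by
    intro S hS
    rw [(Finset.mem_powersetCard.mp hS).2]
  rw [Finset.sum_congr rfl h5, Finset.sum_const, Finset.card_powersetCard, hcard,
    smul_eq_mul]

end Field

/-! ### Binomial coefficients eventually beat polynomials -/

theorem not_choose_le_poly (P : Polynomial ℚ) {a : ℕ} (ha : P.natDegree < a)
    (h : ∀ n : ℕ, a ≤ n → (n.choose a : ℚ) ≤ P.eval (n : ℚ)) : False := by
  classical
  set D : Polynomial ℚ := (a.factorial : ℚ) • P - descPochhammer ℚ a with hD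
  have hmonic : (descPochhammer ℚ a).Monic := monic_descPochhammer ℚ a
  have hne : (descPochhammer ℚ a) ≠ 0 := hmonic.ne_zero
  have hdp_nat : (descPochhammer ℚ a).natDegree = a := descPochhammer_natDegree ℚ a
  have hdp_deg : (descPochhammer ℚ a).degree = (a : WithBot ℕ) := by
    rw [Polynomial.degree_eq_natDegree hne, hdp_nat]
  have hPdeg : ((a.factorial : ℚ) • P).degree < (descPochhammer ℚ a).degree := by
    rw [hdp_deg]
    refine lt_of_le_of_lt (Polynomial.degree_smul_le _ _) ?_
    exact lt_of_le_of_lt Polynomial.degree_le_natDegree (by exact_mod_cast ha)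
  have hDdeg : D.degree = (a : WithBot ℕ) := by
    rw [hD, Polynomial.degree_sub_eq_right_of_degree_lt hPdeg, hdp_deg]
  have hDnat : D.natDegree = a := Polynomial.natDegree_eq_of_degree_eq_some hDdeg
  have hcoeff : D.coeff a = -1 := by
    have hcn : (descPochhammer ℚ a).coeff a = 1 := by
      have h' := hmonic.coeff_natDegree
      rwa [hdp_nat] at h'
    rw [hD, Polynomial.coeff_sub, Polynomial.coeff_smul,
      Polynomial.coeff_eq_zero_of_natDegree_lt ha, smul_zero, zero_sub, hcn]
  have hlc : D.leadingCoeff ≤ 0 := by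
    rw [Polynomial.leadingCoeff, hDnat, hcoeff]; norm_num
  have hdegpos : 0 < D.degree := by
    rw [hDdeg]
    have h' : ((0:ℕ) : WithBot ℕ) < (a : WithBot ℕ) := by
      exact_mod_cast (show 0 < a by omega)
    simpa using h'
  have htend : Filter.Tendsto (fun x : ℚ => Polynomial.eval x D)
      Filter.atTop Filter.atBot :=
    Polynomial.tendsto_atBot_of_leadingCoeff_nonpos D hdegpos hlc
  have htendn : Filter.Tendsto (fun n : ℕ => Polynomial.eval ((n : ℚ)) D)
      Filter.atTop Filter.atBot :=
    htend.comp tendsto_natCast_atTop_atTop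
  have hev : ∀ᶠ n : ℕ in Filter.atTop, Polynomial.eval ((n : ℚ)) D < 0 :=
    htendn.eventually (Filter.eventually_lt_atBot 0)
  obtain ⟨n, hn1, hn2⟩ := (hev.and (Filter.eventually_ge_atTop a)).exists
  have hDeval : Polynomial.eval ((n : ℚ)) D
      = (a.factorial : ℚ) * (Polynomial.eval ((n : ℚ)) P - (n.choose a : ℚ)) := by
    rw [hD, Polynomial.eval_sub, Polynomial.eval_smul,
      descPochhammer_eval_eq_descFactorial ℚ n a,
      Nat.descFactorial_eq_factorial_mul_choose]
    push_cast
    rw [smul_eq_mul]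
    ring
  have hle := h n hn2
  rw [hDeval] at hn1
  have hfac : (0:ℚ) < a.factorial := by exact_mod_cast a.factorial_pos
  nlinarith


theorem W_eq_range_EtopE (n : ℕ) : W V n = LinearMap.range (EtopE V n) := by
  apply le_antisymm
  · intro x hx
    exact ⟨x, EtopE_apply_of_mem_W V hx⟩
  · rintro x ⟨y, rfl⟩
    exact EtopE_mem_W V y

section FieldMain

variable {K : Type} [Field K] (VK : FIsharpModule K)

theorem main_field_exact (hfg : VK.toFI.FinitelyGenerated) :
    ∃ P : Polynomial ℚ, ∀ n : ℕ,
      Module.Finite K (VK.obj n) ∧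
      (Module.finrank K (VK.obj n) : ℚ) = P.eval (n : ℚ) := by
  obtain ⟨hfin, d, hgen⟩ := (fg_iff VK.toFI).mp hfg
  have hW : ∀ a, d < a → W VK a = ⊥ := fun a ha => W_eq_bot_of_generatedLE VK hgen ha
  refine ⟨∑ a ∈ Finset.range (d+1),
    ((Module.finrank K (W VK a) : ℚ) / (a.factorial : ℚ)) • descPochhammer ℚ a,
    fun n => ⟨hfin n, ?_⟩⟩
  have hfr := finrank_eq_sum_choose VK hfin n
  have hExt : Module.finrank K (VK.obj n)
      = ∑ a ∈ Finset.range (d+1), n.choose a * Module.finrank K (W VK a) := by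
    rw [hfr]
    have h1 : ∑ a ∈ Finset.range (n+1), n.choose a * Module.finrank K (W VK a)
        = ∑ a ∈ Finset.range (max n d + 1),
            n.choose a * Module.finrank K (W VK a) := by
      apply Finset.sum_subset
      · intro x hx
        simp only [Finset.mem_range] at hx ⊢
        omega
      · intro x hx hnx
        simp only [Finset.mem_range] at hx hnx
        rw [Nat.choose_eq_zero_of_lt (by omega), zero_mul]
    have h2 : ∑ a ∈ Finset.range (d+1), n.choose a * Module.finrank K (W VK a)
        = ∑ a ∈ Finset.range (max n d + 1),
            n.choose a * Module.finrank K (W VK a) := by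
      apply Finset.sum_subset
      · intro x hx
        simp only [Finset.mem_range] at hx ⊢
        omega
      · intro x hx hnx
        simp only [Finset.mem_range] at hx hnx
        have hzero : Module.finrank K (W VK x) = 0 := by
          rw [hW x (by omega)]
          exact finrank_bot K _
        rw [hzero, mul_zero]
    rw [h1, ← h2]
  rw [hExt, Polynomial.eval_finset_sum, Nat.cast_sum]
  apply Finset.sum_congr rfl
  intro a _
  rw [Polynomial.eval_smul, descPochhammer_eval_eq_descFactorial ℚ n a,
    Nat.descFactorial_eq_factorial_mul_choose, smul_eq_mul]
  have hfne : (a.factorial : ℚ) ≠ 0 := by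
    exact_mod_cast a.factorial_ne_zero
  push_cast
  field_simp

theorem main_field_bound (h : ∃ P : Polynomial ℚ, ∀ n : ℕ,
      Module.Finite K (VK.obj n) ∧
      (Module.finrank K (VK.obj n) : ℚ) ≤ P.eval (n : ℚ)) :
    VK.toFI.FinitelyGenerated := by
  obtain ⟨P, hP⟩ := h
  have hfin : ∀ n, Module.Finite K (VK.obj n) := fun n => (hP n).1
  have hW : ∀ a, P.natDegree < a → W VK a = ⊥ := by
    intro a ha
    by_contra hc
    haveI := hfin a
    haveI : Nontrivial (W VK a) := Submodule.nontrivial_iff_ne_bot.mpr hc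
    have hwpos : 0 < Module.finrank K (W VK a) := Module.finrank_pos
    refine not_choose_le_poly P ha ?_
    intro n hn
    have hsum := finrank_eq_sum_choose VK hfin n
    have hterm : n.choose a * Module.finrank K (W VK a)
        ≤ Module.finrank K (VK.obj n) := by
      rw [hsum]
      exact Finset.single_le_sum
        (f := fun a => n.choose a * Module.finrank K (W VK a))
        (fun i _ => Nat.zero_le _) (Finset.mem_range.mpr (by omega))
    have h1 : n.choose a ≤ Module.finrank K (VK.obj n) :=
      le_trans (Nat.le_mul_of_pos_right _ hwpos) hterm
    calc (n.choose a : ℚ) ≤ (Module.finrank K (VK.obj n) : ℚ) := by exact_mod_cast h1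
      _ ≤ P.eval (n : ℚ) := (hP n).2
  exact fg_of_spanning VK.toFI hfin (generatedLE_of_W VK (fun a ha => hW a ha))

end FieldMain

section RingMain

variable {R : Type} [CommRing R] (U : FIsharpModule R)

theorem main_ring_rev
    (h : ∃ C d : ℕ, ∀ n : ℕ, ∃ s : Finset (U.obj n),
      Submodule.span R (s : Set (U.obj n)) = ⊤ ∧ s.card ≤ C * (n + 1) ^ d) :
    U.toFI.FinitelyGenerated := by
  classical
  obtain ⟨C, d, hC⟩ := h
  have hfin : ∀ n, Module.Finite R (U.obj n) := by
    intro n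
    obtain ⟨s, hs1, _⟩ := hC n
    exact Module.finite_def.mpr ⟨s, hs1⟩
  have hW : ∀ a, d < a → W U a = ⊥ := by
    intro a ha
    by_contra hc
    haveI hWfin : Module.Finite R (W U a) := by
      rw [W_eq_range_EtopE U a]
      haveI := hfin a
      infer_instance
    haveI : Nontrivial (W U a) := Submodule.nontrivial_iff_ne_bot.mpr hc
    set I : Ideal R := (⊤ : Submodule R (W U a)).annihilator with hI
    have hIproper : I ≠ ⊤ := by
      intro htop
      have h1 : (1:R) ∈ I := htop ▸ Submodule.mem_top
      obtain ⟨x, hx⟩ := exists_ne (0 : W U a)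
      have := Submodule.mem_annihilator.mp h1 x trivial
      rw [one_smul] at this
      exact hx this
    obtain ⟨m, hm, hIm⟩ := Ideal.exists_le_maximal I hIproper
    haveI := hm
    have hne : (m • ⊤ : Submodule R (W U a)) ≠ ⊤ := by
      intro heq
      obtain ⟨r, hr1, hr2⟩ :=
        Submodule.exists_sub_one_mem_and_smul_eq_zero_of_fg_of_le_smul m
          (⊤ : Submodule R (W U a)) (Module.finite_def.mp hWfin)
          (by rw [heq])
      have hrI : r ∈ I := Submodule.mem_annihilator.mpr (fun x _ => hr2 x trivial)
      have hone : (1:R) ∈ m := by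
        have := m.sub_mem (hIm hrI) hr1
        simpa using this
      exact hm.ne_top ((Ideal.eq_top_iff_one m).mpr hone)
    have hlt : (m • ⊤ : Submodule R (W U a)) < ⊤ := lt_top_iff_ne_top.mpr hne
    haveI : Nontrivial ((W U a) ⧸ (m • ⊤ : Submodule R (W U a))) :=
      Submodule.Quotient.nontrivial_iff.mpr hlt.ne
    letI : Field (R ⧸ m) := Ideal.Quotient.field m
    haveI htower : IsScalarTower R (R ⧸ m) ((W U a) ⧸ (m • ⊤ : Submodule R (W U a))) :=
      Module.IsTorsionBySet.isScalarTower _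
    haveI : Module.Finite R ((W U a) ⧸ (m • ⊤ : Submodule R (W U a))) :=
      Module.Finite.of_surjective
        ((m • ⊤ : Submodule R (W U a)).mkQ) (Submodule.mkQ_surjective _)
    haveI : Module.Finite (R ⧸ m) ((W U a) ⧸ (m • ⊤ : Submodule R (W U a))) :=
      Module.Finite.of_restrictScalars_finite R _ _
    have hWbpos : 0 < Module.finrank (R ⧸ m)
        ((W U a) ⧸ (m • ⊤ : Submodule R (W U a))) := Module.finrank_pos
    refine not_choose_le_poly ((C:ℚ) • ((Polynomial.X + Polynomial.C 1)^d))
      (lt_of_le_of_lt ?_ (show d < a from ha)) ?_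
    · refine le_trans (Polynomial.natDegree_smul_le _ _) ?_
      rw [(Polynomial.monic_X_add_C (1:ℚ)).natDegree_pow, Polynomial.natDegree_X_add_C,
        mul_one]
    · intro n hn
      set Wb := (W U a) ⧸ (m • ⊤ : Submodule R (W U a)) with hWb
      set ι := {S : Finset (Fin n) // S.card = a} with hι
      set ψ : U.obj n →ₗ[R] (ι → Wb) :=
        LinearMap.pi (fun S : ι =>
          ((m • ⊤ : Submodule R (W U a)).mkQ).comp
            ((LinearMap.proj S).comp (projW U n a))) with hψ
      have hsurj : Function.Surjective ψ := by
        intro g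
        choose w hw using fun S : ι =>
          Submodule.mkQ_surjective (m • ⊤ : Submodule R (W U a)) (g S)
        obtain ⟨x, hx⟩ := projW_surjective U n a w
        refine ⟨x, ?_⟩
        funext S
        show ((m • ⊤ : Submodule R (W U a)).mkQ) ((projW U n a x) S) = g S
        rw [hx]
        exact hw S
      obtain ⟨s, hs1, hs2⟩ := hC n
      have h1 : Submodule.span R (ψ '' ↑s) = ⊤ := by
        rw [← Submodule.map_span, hs1, Submodule.map_top,
          LinearMap.range_eq_top.mpr hsurj]
      have h2 : Submodule.span (R ⧸ m) (ψ '' ↑s) = ⊤ := by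
        rw [eq_top_iff]
        intro x _
        have hx : x ∈ Submodule.span R (ψ '' ↑s) := by rw [h1]; trivial
        exact Submodule.span_le_restrictScalars R (R ⧸ m) _ hx
      have h3 : Submodule.span (R ⧸ m) (↑(s.image ψ) : Set (ι → Wb)) = ⊤ := by
        rw [Finset.coe_image]
        exact h2
      have hfr1 : Module.finrank (R ⧸ m) (ι → Wb) ≤ s.card := by
        have h4 := finrank_span_finset_le_card (R := R ⧸ m) (M := ι → Wb) (s.image ψ)
        rw [Set.finrank, h3, finrank_top] at h4
        exact h4.trans Finset.card_image_le
      have hfr2 : Fintype.card ι ≤ Module.finrank (R ⧸ m) (ι → Wb) := by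
        rw [Module.finrank_pi_fintype (R ⧸ m), Finset.sum_const, Finset.card_univ,
          smul_eq_mul]
        exact Nat.le_mul_of_pos_right _ hWbpos
      have hcardι : Fintype.card ι = n.choose a := by
        rw [Fintype.card_subtype]
        have : (Finset.univ : Finset (Finset (Fin n))).filter (fun S => S.card = a)
            = Finset.powersetCard a (Finset.univ : Finset (Fin n)) := by
          rw [Finset.powersetCard_eq_filter, Finset.powerset_univ]
        rw [this, Finset.card_powersetCard]
        simp
      have hfinal : n.choose a ≤ C * (n+1)^d := by
        calc n.choose a = Fintype.card ι := hcardι.symm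
          _ ≤ Module.finrank (R ⧸ m) (ι → Wb) := hfr2
          _ ≤ s.card := hfr1
          _ ≤ C * (n+1)^d := hs2
      have heval : Polynomial.eval (n:ℚ) ((C:ℚ) • ((Polynomial.X + Polynomial.C 1)^d))
          = (C:ℚ) * ((n:ℚ)+1)^d := by
        simp [Polynomial.eval_smul, smul_eq_mul]
      rw [heval]
      exact_mod_cast hfinal
  exact fg_of_spanning U.toFI hfin (generatedLE_of_W U (fun a ha => hW a ha))

end RingMain

end CEF

/-- **Dimensions of finitely generated FI♯-modules**
(Church–Ellenberg–Farb, Theorem 1.7 and Corollary 2.27).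
For an FI♯-module `V` over a field `k` (of arbitrary characteristic), the following
are equivalent: (i) `V` is finitely generated as an FI-module; (ii) `dim_k V_n` is
bounded above by a polynomial in `n`; (iii) `dim_k V_n` is exactly equal to a
polynomial in `n` for all `n ≥ 0`.  Moreover, for an FI♯-module `U` over an arbitrary
commutative ring `R`: `U` is finitely generated if and only if the `R`-module `U_n` is
generated by `O(n^d)` elements for some `d`. -/
theorem fisharp_dimension_polynomial (k : Type) [Field k] (V : FIsharpModule k)
    (R : Type) [CommRing R] (U : FIsharpModule R) :
    ((V.toFI.FinitelyGenerated ↔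
        ∃ P : Polynomial ℚ, ∀ n : ℕ,
          Module.Finite k (V.obj n) ∧
          (Module.finrank k (V.obj n) : ℚ) ≤ P.eval (n : ℚ)) ∧
     (V.toFI.FinitelyGenerated ↔
        ∃ P : Polynomial ℚ, ∀ n : ℕ,
          Module.Finite k (V.obj n) ∧
          (Module.finrank k (V.obj n) : ℚ) = P.eval (n : ℚ))) ∧
    (U.toFI.FinitelyGenerated ↔
        ∃ C d : ℕ, ∀ n : ℕ, ∃ s : Finset (U.obj n),
          Submodule.span R (s : Set (U.obj n)) = ⊤ ∧ s.card ≤ C * (n + 1) ^ d) := by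
  refine ⟨⟨?_, ?_⟩, ?_⟩
  · constructor
    · intro hfg
      obtain ⟨P, hP⟩ := CEF.main_field_exact V hfg
      exact ⟨P, fun n => ⟨(hP n).1, le_of_eq (hP n).2⟩⟩
    · exact CEF.main_field_bound V
  · constructor
    · exact CEF.main_field_exact V
    · rintro ⟨P, hP⟩
      exact CEF.main_field_bound V ⟨P, fun n => ⟨(hP n).1, le_of_eq (hP n).2⟩⟩
  · constructor
    · exact CEF.spanning_card_of_fg U.toFI
    · exact CEF.main_ring_rev U
end

section
/- Let k be a Noetherian ring containing Q. Then the category of FI-modules over k is Noetherian: every sub-FI-module of a finitely generated FI-module over k is itself finitely generated. -/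
open Function

universe u

variable {k : Type} [CommRing k]

/-- A sub-FI-module `N` of `V` is finitely generated: there is a finite set of
elements of `N` such that every sub-FI-module of `V` containing them contains `N`. -/
def SubFI.FinitelyGenerated {V : FIModule k} (N : SubFI V) : Prop :=
  ∃ S : Finset (Σ n : ℕ, V.obj n),
    (∀ s ∈ S, s.2 ∈ N.carrier s.1) ∧
    ∀ M : SubFI V, (∀ s ∈ S, s.2 ∈ M.carrier s.1) →
      ∀ n : ℕ, N.carrier n ≤ M.carrier n

/-! ### Order on sub-FI-modules -/

instance {V : FIModule k} : PartialOrder (SubFI V) where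
  le N M := ∀ n, N.carrier n ≤ M.carrier n
  le_refl N n := le_rfl
  le_trans a b c h1 h2 n := (h1 n).trans (h2 n)
  le_antisymm a b h1 h2 := by
    cases a with | mk ca ha =>
    cases b with | mk cb hb =>
    have : ca = cb := funext fun n => le_antisymm (h1 n) (h2 n)
    subst this
    rfl

theorem SubFI.le_def {V : FIModule k} {N M : SubFI V} :
    N ≤ M ↔ ∀ n, N.carrier n ≤ M.carrier n := Iff.rfl

/-! ### The sub-FI-module generated by a finite set -/

def genSet {V : FIModule k} (T : Finset (Σ n : ℕ, V.obj n)) (n : ℕ) : Set (V.obj n) :=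
  {v | ∃ s ∈ T, ∃ g : Fin s.1 ↪ Fin n, V.map g s.2 = v}

def gen {V : FIModule k} (T : Finset (Σ n : ℕ, V.obj n)) : SubFI V where
  carrier n := Submodule.span k (genSet T n)
  map_mem {m n} f {x} hx := by
    have h1 : V.map f x ∈ Submodule.map (V.map f) (Submodule.span k (genSet T m)) :=
      Submodule.mem_map_of_mem hx
    rw [Submodule.map_span] at h1
    refine Submodule.span_le.2 ?_ h1
    rintro _ ⟨_, ⟨s, hs, g, rfl⟩, rfl⟩
    exact Submodule.subset_span ⟨s, hs, g.trans f, by rw [V.map_comp]; rfl⟩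

theorem mem_gen_self {V : FIModule k} {T : Finset (Σ n : ℕ, V.obj n)} {s : Σ n : ℕ, V.obj n}
    (hs : s ∈ T) : s.2 ∈ (gen T).carrier s.1 :=
  Submodule.subset_span ⟨s, hs, Embedding.refl _, by rw [V.map_id]; rfl⟩

theorem gen_le {V : FIModule k} {T : Finset (Σ n : ℕ, V.obj n)} {M : SubFI V}
    (h : ∀ s ∈ T, s.2 ∈ M.carrier s.1) : gen T ≤ M := by
  intro n
  refine Submodule.span_le.2 ?_
  rintro _ ⟨s, hs, g, rfl⟩
  exact M.map_mem g (h s hs)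

theorem gen_mono {V : FIModule k} {T T' : Finset (Σ n : ℕ, V.obj n)} (h : T ⊆ T') :
    gen T ≤ gen T' := fun n =>
  Submodule.span_mono (fun v => by rintro ⟨s, hs, g, rfl⟩; exact ⟨s, h hs, g, rfl⟩)

/-- If the sub-FI-modules of `V` are well-founded under `>`, every sub-FI-module is
finitely generated. -/
theorem fg_of_wf {V : FIModule k}
    (hwf : WellFounded ((· > ·) : SubFI V → SubFI V → Prop)) (N : SubFI V) :
    N.FinitelyGenerated := by
  classical
  obtain ⟨P, hPΩ, hmax⟩ := hwf.has_min
    {P : SubFI V | ∃ T : Finset (Σ n : ℕ, V.obj n),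
      (∀ s ∈ T, s.2 ∈ N.carrier s.1) ∧ P = gen T}
    ⟨gen ∅, ∅, by simp, rfl⟩
  obtain ⟨T, hTN, rfl⟩ := hPΩ
  refine ⟨T, hTN, fun M hM n => ?_⟩
  have hNle : ∀ m, N.carrier m ≤ (gen T).carrier m := by
    intro m x hx
    by_contra hxm
    obtain ⟨T', hsub, hmemT', hT'N⟩ :
        ∃ T' : Finset (Σ n : ℕ, V.obj n), T ⊆ T' ∧ (⟨m, x⟩ : Σ n : ℕ, V.obj n) ∈ T' ∧
          ∀ s ∈ T', s.2 ∈ N.carrier s.1 := by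
      refine ⟨insert ⟨m, x⟩ T, Finset.subset_insert _ _, Finset.mem_insert_self _ _, ?_⟩
      intro s hs
      rcases Finset.mem_insert.1 hs with rfl | hs
      · exact hx
      · exact hTN s hs
    have hgt : gen T < gen T' := by
      refine lt_of_le_of_ne (gen_mono hsub) ?_
      intro h
      exact hxm (h ▸ mem_gen_self hmemT')
    exact hmax (gen T') ⟨T', hT'N, rfl⟩ hgt
  exact fun x hx => gen_le hM n (hNle n hx)

/-! ### The free FI-module on generators of degrees `d i` -/

section Free

variable (k)
variable (r : ℕ) (d : Fin r → ℕ)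

def Mon (n : ℕ) : Type := Σ i : Fin r, (Fin (d i) ↪ Fin n)

variable {r d}

instance (n : ℕ) : Finite (Mon r d n) := by unfold Mon; infer_instance

def monMap {m n : ℕ} (g : Fin m ↪ Fin n) (x : Mon r d m) : Mon r d n := ⟨x.1, x.2.trans g⟩

theorem monMap_injective {m n : ℕ} (g : Fin m ↪ Fin n) :
    Function.Injective (monMap (r := r) (d := d) g) := by
  rintro ⟨i, f⟩ ⟨j, f'⟩ h
  obtain ⟨rfl, h2⟩ := Sigma.mk.inj_iff.1 h
  refine Sigma.mk.inj_iff.2 ⟨rfl, heq_of_eq ?_⟩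
  have h2' : f.trans g = f'.trans g := eq_of_heq h2
  ext t
  exact congrArg Fin.val (g.injective (show (f.trans g) t = (f'.trans g) t by rw [h2']))

theorem monMap_id {n : ℕ} : monMap (r := r) (d := d) (Embedding.refl (Fin n)) = id := rfl

theorem monMap_comp {m n p : ℕ} (f : Fin m ↪ Fin n) (g : Fin n ↪ Fin p) :
    monMap (r := r) (d := d) (f.trans g) = monMap g ∘ monMap f := rfl

/-- The key used to linearly order monomials of each degree. -/
def mkey {n : ℕ} (x : Mon r d n) : ℕ ×ₗ List (Fin n) :=
  toLex ((x.1 : ℕ), List.ofFn (fun t => x.2 t))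

theorem mkey_injective {n : ℕ} : Function.Injective (mkey (r := r) (d := d) (n := n)) := by
  rintro ⟨i, f⟩ ⟨j, f'⟩ h
  have h' := toLex.injective h
  have h1 : (i : ℕ) = (j : ℕ) := congrArg Prod.fst h'
  have hij : i = j := Fin.val_injective h1
  subst hij
  have h2 : List.ofFn (fun t => f t) = List.ofFn (fun t => f' t) := congrArg Prod.snd h'
  have h3 := List.ofFn_inj.1 h2
  refine Sigma.mk.inj_iff.2 ⟨rfl, heq_of_eq ?_⟩
  ext t
  exact congrArg Fin.val (congrFun h3 t)

noncomputable instance (n : ℕ) : LinearOrder (Mon r d n) :=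
  LinearOrder.lift' mkey mkey_injective

theorem mon_lt_iff {n : ℕ} {x y : Mon r d n} : x < y ↔ mkey x < mkey y := Iff.rfl

theorem lex_map {n m : ℕ} {g : Fin n → Fin m} (hg : StrictMono g) :
    ∀ {l l' : List (Fin n)}, List.Lex (· < ·) l l' → List.Lex (· < ·) (l.map g) (l'.map g) := by
  intro l l' h
  induction h with
  | nil => simpa using List.Lex.nil
  | cons _ ih => exact List.Lex.cons ih
  | rel hab => simpa using List.Lex.rel (hg hab)

theorem monMap_strictMono {m n : ℕ} {g : Fin m ↪ Fin n} (hg : StrictMono g)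
    {x y : Mon r d m} (h : x < y) : monMap g x < monMap g y := by
  rw [mon_lt_iff] at h ⊢
  have e : ∀ z : Mon r d m,
      mkey (monMap g z) = toLex ((z.1 : ℕ), (List.ofFn (fun t => z.2 t)).map g) := by
    intro z
    unfold mkey monMap
    rw [List.map_ofFn]
    rfl
  rw [e, e]
  unfold mkey at h
  rw [Prod.Lex.lt_iff] at h ⊢
  rcases h with h | ⟨h1, h2⟩
  · exact Or.inl h
  · exact Or.inr ⟨h1, lex_map hg h2⟩

theorem monMap_mono {m n : ℕ} {g : Fin m ↪ Fin n} (hg : StrictMono g)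
    {x y : Mon r d m} (h : x ≤ y) : monMap g x ≤ monMap g y := by
  rcases eq_or_lt_of_le h with rfl | h
  · exact le_rfl
  · exact (monMap_strictMono hg h).le

variable (r d) in
noncomputable def FreeFI : FIModule k where
  obj n := Mon r d n →₀ k
  map g := Finsupp.lmapDomain k k (monMap g)
  map_id n := by
    show Finsupp.lmapDomain k k (monMap (Embedding.refl (Fin n))) = LinearMap.id
    rw [monMap_id, Finsupp.lmapDomain_id]
  map_comp {m n p} f g := by
    show Finsupp.lmapDomain k k (monMap (f.trans g)) = _
    rw [monMap_comp, Finsupp.lmapDomain_comp]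

theorem freeFI_map_apply {m n : ℕ} (g : Fin m ↪ Fin n) (v : (FreeFI k r d).obj m) :
    (FreeFI k r d).map g v = Finsupp.mapDomain (monMap g) v := rfl

end Free

/-! ### Initial coefficient ideals -/

section Groebner

variable (k)
variable {r : ℕ} {d : Fin r → ℕ}

noncomputable def inId (N : SubFI (FreeFI k r d)) (p : Σ n : ℕ, Mon r d n) : Submodule k k :=
  Submodule.map (Finsupp.lapply p.2 : (Mon r d p.1 →₀ k) →ₗ[k] k)
    (N.carrier p.1 ⊓ Finsupp.supported k k {y | y ≤ p.2})

theorem mem_inId {N : SubFI (FreeFI k r d)} {p : Σ n : ℕ, Mon r d n} {c : k} :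
    c ∈ inId k N p ↔ ∃ v : Mon r d p.1 →₀ k,
      v ∈ N.carrier p.1 ∧ (∀ y ∈ v.support, y ≤ p.2) ∧ v p.2 = c := by
  constructor
  · rintro ⟨v, ⟨hvN, hvs⟩, rfl⟩
    exact ⟨v, hvN, fun y hy => (Finsupp.mem_supported k v).1 hvs hy, rfl⟩
  · rintro ⟨v, hvN, hvs, rfl⟩
    exact ⟨v, ⟨hvN, (Finsupp.mem_supported k v).2 (fun y hy => hvs y hy)⟩, rfl⟩

theorem inId_mono {N M : SubFI (FreeFI k r d)} (h : N ≤ M) (p : Σ n : ℕ, Mon r d n) :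
    inId k N p ≤ inId k M p :=
  Submodule.map_mono (inf_le_inf_right _ (h p.1))

theorem inId_le_of_monMap {N : SubFI (FreeFI k r d)} {p q : Σ n : ℕ, Mon r d n}
    (g : Fin p.1 ↪ Fin q.1) (hg : StrictMono g) (hq : monMap (r := r) (d := d) g p.2 = q.2) :
    inId k N p ≤ inId k N q := by
  intro c hc
  rw [mem_inId] at hc ⊢
  obtain ⟨v, hvN, hvs, rfl⟩ := hc
  classical
  refine ⟨Finsupp.mapDomain (monMap g) v, ?_, ?_, ?_⟩
  · have h1 := N.map_mem g hvN
    exact h1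
  · intro y hy
    obtain ⟨z, hz, rfl⟩ := Finset.mem_image.1 (Finsupp.mapDomain_support hy)
    rw [← hq]
    exact monMap_mono hg (hvs z hz)
  · rw [← hq, Finsupp.mapDomain_apply (monMap_injective g)]

/-- The capture lemma: if `N ≤ M` and all initial-coefficient ideals agree,
then `M ≤ N`. -/
theorem le_of_inId_le {N M : SubFI (FreeFI k r d)} (hle : N ≤ M)
    (hId : ∀ p, inId k M p ≤ inId k N p) : M ≤ N := by
  intro n
  haveI : WellFoundedLT (Mon r d n) := Finite.to_wellFoundedLT
  suffices H : ∀ b : WithBot (Mon r d n), ∀ v : Mon r d n →₀ k, v ∈ M.carrier n →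
      v.support.max = b → v ∈ N.carrier n from fun v hv => H _ v hv rfl
  intro b
  induction b using WellFoundedLT.induction with
  | ind b IH =>
  intro v hv hb
  rcases b with _ | x
  · have h0 : v = 0 := Finsupp.support_eq_empty.1 (Finset.max_eq_bot.1 hb)
    rw [h0]
    exact zero_mem _
  · have hsupp : ∀ y ∈ v.support, y ≤ x := by
      intro y hy
      have h1 := Finset.le_max hy
      rw [hb] at h1
      exact WithBot.coe_le_coe.1 h1
    have hc : v x ∈ inId k M ⟨n, x⟩ := (mem_inId k).2 ⟨v, hv, hsupp, rfl⟩
    obtain ⟨w, hwN, hws, hwx⟩ := (mem_inId k).1 (hId ⟨n, x⟩ hc)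
    have hvw : v - w ∈ M.carrier n := sub_mem hv (hle n hwN)
    have hmaxlt : (v - w).support.max < (x : WithBot (Mon r d n)) := by
      rcases hmax2 : (v - w).support.max with _ | z
      · exact WithBot.bot_lt_coe x
      · have hzmem := Finset.mem_of_max hmax2
        have hz1 : (v - w) z ≠ 0 := Finsupp.mem_support_iff.1 hzmem
        have hzne : z ≠ x := by
          intro e
          apply hz1
          rw [e, Finsupp.sub_apply, hwx, sub_self]
        have hzle : z ≤ x := by
          have h2 : v z ≠ 0 ∨ w z ≠ 0 := by
            by_contra hcon
            push_neg at hcon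
            apply hz1
            rw [Finsupp.sub_apply, hcon.1, hcon.2, sub_self]
          rcases h2 with h | h
          · exact hsupp z (Finsupp.mem_support_iff.2 h)
          · exact hws z (Finsupp.mem_support_iff.2 h)
        exact WithBot.coe_lt_coe.2 (lt_of_le_of_ne hzle hzne)
    have hinN : v - w ∈ N.carrier n := IH _ hmaxlt (v - w) hvw rfl
    have hfin := add_mem hinN hwN
    have key : v = (v - w) + w := (sub_add_cancel v w).symm
    rw [key]
    exact hfin

/-! ### The divisibility quasi-order on monomials, and its wqo property -/

variable (r d) in
def MonR (x y : Σ n : ℕ, Mon r d n) : Prop :=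
  ∃ g : Fin x.1 ↪ Fin y.1, StrictMono g ∧ monMap g x.2 = y.2

instance : IsRefl (Σ n : ℕ, Mon r d n) (MonR r d) :=
  ⟨fun x => ⟨Embedding.refl _, fun _ _ h => h, rfl⟩⟩

instance : IsTrans (Σ n : ℕ, Mon r d n) (MonR r d) :=
  ⟨fun x y z => by
    rintro ⟨g, hg, hq⟩ ⟨g', hg', hq'⟩
    exact ⟨g.trans g', hg'.comp hg, by
      rw [show monMap (g.trans g') x.2 = monMap g' (monMap g x.2) from rfl, hq, hq']⟩⟩

instance : IsPreorder (Σ n : ℕ, Mon r d n) (MonR r d) where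
  refl := fun a => refl_of (MonR r d) a
  trans := fun _ _ _ h h' => trans_of (MonR r d) h h'

noncomputable def word {D n : ℕ} (e : Fin D ↪ Fin n) : List (Option (Fin D)) :=
  List.ofFn (fun j : Fin n => Function.partialInv e j)

theorem word_monR {D a b : ℕ} (e₁ : Fin D ↪ Fin a) (e₂ : Fin D ↪ Fin b)
    (h : List.Sublist (word e₁) (word e₂)) : ∃ g : Fin a ↪ Fin b, StrictMono g ∧ e₁.trans g = e₂ := by
  obtain ⟨F, hF⟩ := List.sublist_iff_exists_orderEmbedding_getElem?_eq.1 h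
  have hw1 : ∀ j : Fin a, (word e₁)[(j : ℕ)]? = some (Function.partialInv e₁ j) := by
    intro j
    rw [word, List.getElem?_ofFn]
    simp [j.isLt]
  have hlt : ∀ j : Fin a, (F (j : ℕ) : ℕ) < b := by
    intro j
    by_contra hcon
    push_neg at hcon
    have h1 : (word e₂)[F (j : ℕ)]? = none :=
      List.getElem?_eq_none_iff.2 (by simpa [word] using hcon)
    rw [← hF, hw1 j] at h1
    exact Option.some_ne_none _ h1
  have hval : ∀ j : Fin a,
      Function.partialInv e₂ ⟨F (j : ℕ), hlt j⟩ = Function.partialInv e₁ j := by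
    intro j
    have h2 : (word e₂)[F (j : ℕ)]? =
        some (Function.partialInv e₂ ⟨F (j : ℕ), hlt j⟩) := by
      rw [word, List.getElem?_ofFn]
      simp [hlt j]
    have h3 := (hF (j : ℕ)).symm
    rw [hw1 j, h2] at h3
    exact Option.some.inj h3
  have hgsm : StrictMono (fun j : Fin a => (⟨F (j : ℕ), hlt j⟩ : Fin b)) := by
    intro x y hxy
    exact Fin.mk_lt_mk.2 (F.strictMono hxy)
  refine ⟨⟨fun j => ⟨F (j : ℕ), hlt j⟩, hgsm.injective⟩, hgsm, ?_⟩
  ext t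
  have h1 : Function.partialInv e₁ (e₁ t) = some t := Function.partialInv_left e₁.injective t
  have h2 := (hval (e₁ t)).trans h1
  have h3 : e₂ t = ⟨F ((e₁ t : Fin a) : ℕ), hlt (e₁ t)⟩ :=
    (Function.partialInv_of_injective e₂.injective t _).1 h2
  exact congrArg Fin.val h3.symm

theorem finite_pwo_eq (β : Type) [Finite β] :
    (Set.univ : Set β).PartiallyWellOrderedOn (· = ·) := by
  intro f
  obtain ⟨m, n, hne, he⟩ := Finite.exists_ne_map_eq_of_infinite f
  rcases hne.lt_or_gt with h | h
  · exact ⟨m, n, h, congrArg Subtype.val he⟩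
  · exact ⟨n, m, h, congrArg Subtype.val he.symm⟩

theorem pwo_fixed (i : Fin r) :
    (Set.range (fun p : Σ n : ℕ, (Fin (d i) ↪ Fin n) =>
      (⟨p.1, ⟨i, p.2⟩⟩ : Σ n : ℕ, Mon r d n))).PartiallyWellOrderedOn (MonR r d) := by
  intro f
  have hf := fun j => (f j).2
  choose p hp using hf
  haveI : IsRefl (Option (Fin (d i))) (· = ·) := ⟨fun _ => rfl⟩
  haveI : IsTrans (Option (Fin (d i))) (· = ·) := ⟨fun _ _ _ h h' => h.trans h'⟩
  have hwords := (finite_pwo_eq (Option (Fin (d i)))).partiallyWellOrderedOn_sublistForall₂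
  obtain ⟨m, n, hmn, hrel⟩ := hwords (fun j => ⟨word (p j).2, fun x _ => Set.mem_univ x⟩)
  obtain ⟨l, hl1, hl2⟩ := List.sublistForall₂_iff.1 hrel
  rw [List.forall₂_eq_eq_eq] at hl1
  subst hl1
  obtain ⟨g, hg, hge⟩ := word_monR (p m).2 (p n).2 hl2
  refine ⟨m, n, hmn, ?_⟩
  show MonR r d (f m).1 (f n).1
  rw [← hp m, ← hp n]
  exact ⟨g, hg, by rw [show monMap g (⟨i, (p m).2⟩ : Mon r d (p m).1) = ⟨i, (p m).2.trans g⟩ from rfl, hge]⟩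

theorem pwo_univ :
    (Set.univ : Set (Σ n : ℕ, Mon r d n)).PartiallyWellOrderedOn (MonR r d) := by
  have main : ∀ s : Finset (Fin r),
      {x : Σ n : ℕ, Mon r d n | x.2.1 ∈ s}.PartiallyWellOrderedOn (MonR r d) := by
    intro s
    classical
    induction s using Finset.induction with
    | empty => simpa using Set.partiallyWellOrderedOn_empty (MonR r d)
    | @insert a s hna ih =>
      have hsplit : {x : Σ n : ℕ, Mon r d n | x.2.1 ∈ insert a s} =
          {x : Σ n : ℕ, Mon r d n | x.2.1 = a} ∪ {x : Σ n : ℕ, Mon r d n | x.2.1 ∈ s} := by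
        ext x
        simp [Finset.mem_insert]
      rw [hsplit]
      refine Set.PartiallyWellOrderedOn.union ?_ ih
      refine (pwo_fixed a).mono ?_
      rintro ⟨n, j, e⟩ (h : j = a)
      subst h
      exact ⟨⟨n, e⟩, rfl⟩
  have h := main Finset.univ
  have : {x : Σ n : ℕ, Mon r d n | x.2.1 ∈ Finset.univ} = Set.univ := by
    ext x; simp
  rwa [this] at h

end Groebner

/-! ### Stabilization of chains of sub-FI-modules of a free FI-module -/

section Chain

variable (k) {r : ℕ} {d : Fin r → ℕ} [IsNoetherianRing k]

theorem freeFI_chain (C : ℕ →o SubFI (FreeFI k r d)) : ∃ J, ∀ j, J ≤ j → C J = C j := by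
  by_contra hcon
  push_neg at hcon
  have Inmono : ∀ {j j' : ℕ}, j ≤ j' → ∀ p, inId k (C j) p ≤ inId k (C j') p :=
    fun h p => inId_mono k (C.monotone h) p
  have key : ∀ J, ∃ t, J ≤ t ∧ ∃ p, inId k (C t) p < inId k (C (t + 1)) p := by
    intro J
    by_contra hk
    push_neg at hk
    obtain ⟨j, hJj, hne⟩ := hcon J
    apply hne
    have hk' : ∀ t, J ≤ t → ∀ p, inId k (C t) p = inId k (C (t + 1)) p := fun t ht p =>
      (lt_or_eq_of_le (Inmono (Nat.le_succ t) p)).resolve_left (hk t ht p)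
    have grow : ∀ m p, inId k (C J) p = inId k (C (J + m)) p := by
      intro m
      induction m with
      | zero => exact fun p => rfl
      | succ m ih => exact fun p => (ih p).trans (hk' (J + m) (Nat.le_add_right _ _) p)
    have hIneq : ∀ p, inId k (C J) p = inId k (C j) p := by
      intro p
      have h2 := grow (j - J) p
      rwa [Nat.add_sub_cancel' hJj] at h2
    have hle : C J ≤ C j := C.monotone hJj
    exact le_antisymm hle (le_of_inId_le k hle (fun p => (hIneq p).ge))
  -- build a strictly increasing sequence of "jump" positions
  let u : ℕ → ℕ := fun s =>
    Nat.rec (Classical.choose (key 0)) (fun _ prev => Classical.choose (key (prev + 1))) s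
  have hu0 : ∀ s, ∃ p, inId k (C (u s)) p < inId k (C (u s + 1)) p := by
    intro s
    cases s with
    | zero => exact (Classical.choose_spec (key 0)).2
    | succ s => exact (Classical.choose_spec (key (u s + 1))).2
  have humono : ∀ s, u s < u (s + 1) := fun s => (Classical.choose_spec (key (u s + 1))).1
  have hustrict : StrictMono u := strictMono_nat_of_lt_succ humono
  let p : ℕ → Σ n : ℕ, Mon r d n := fun s => Classical.choose (hu0 s)
  have hp : ∀ s, inId k (C (u s)) (p s) < inId k (C (u s + 1)) (p s) :=
    fun s => Classical.choose_spec (hu0 s)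
  have hcex : ∀ s, ∃ c, c ∈ inId k (C (u s + 1)) (p s) ∧ c ∉ inId k (C (u s)) (p s) := by
    intro s
    obtain ⟨-, cc, hcc1, hcc2⟩ := SetLike.lt_iff_le_and_exists.1 (hp s)
    exact ⟨cc, hcc1, hcc2⟩
  let c : ℕ → k := fun s => Classical.choose (hcex s)
  have hc1 : ∀ s, c s ∈ inId k (C (u s + 1)) (p s) := fun s => (Classical.choose_spec (hcex s)).1
  have hc2 : ∀ s, c s ∉ inId k (C (u s)) (p s) := fun s => (Classical.choose_spec (hcex s)).2
  -- extract a monotone subsequence for the divisibility order on monomials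
  obtain ⟨φ, hφ⟩ := pwo_univ.exists_monotone_subseq (f := p) (fun _ => Set.mem_univ _)
  -- the ideal of coefficients stabilizes since `k` is Noetherian
  let B : ℕ →o Submodule k k :=
    ⟨fun m => Submodule.span k ((fun t => c (φ t)) '' Set.Iic m),
      fun a b hab => Submodule.span_mono (Set.image_mono (Set.Iic_subset_Iic.2 hab))⟩
  obtain ⟨m₀, hm₀⟩ := monotone_stabilizes_iff_noetherian.2
    (isNoetherianRing_iff.1 inferInstance) B
  have hAin : B m₀ ≤ inId k (C (u (φ (m₀ + 1)))) (p (φ (m₀ + 1))) := by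
    refine Submodule.span_le.2 ?_
    rintro _ ⟨t, ht, rfl⟩
    have ht' : t ≤ m₀ + 1 := le_trans ht (Nat.le_succ m₀)
    have h1 : φ t < φ (m₀ + 1) := φ.strictMono (lt_of_le_of_lt ht (Nat.lt_succ_self m₀))
    have h2 : u (φ t) + 1 ≤ u (φ (m₀ + 1)) := Nat.succ_le_of_lt (hustrict h1)
    obtain ⟨g, hg, hq⟩ := hφ t (m₀ + 1) ht'
    exact inId_le_of_monMap k g hg hq (Inmono h2 _ (hc1 (φ t)))
  have hin : c (φ (m₀ + 1)) ∈ inId k (C (u (φ (m₀ + 1)))) (p (φ (m₀ + 1))) := by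
    apply hAin
    rw [hm₀ (m₀ + 1) (Nat.le_succ m₀)]
    exact Submodule.subset_span ⟨m₀ + 1, Set.mem_Iic.2 le_rfl, rfl⟩
  exact hc2 (φ (m₀ + 1)) hin

theorem freeFI_wf :
    WellFounded ((· > ·) : SubFI (FreeFI k r d) → SubFI (FreeFI k r d) → Prop) :=
  (wellFoundedGT_iff_monotone_chain_condition.2 (fun a => freeFI_chain k a)).wf

theorem freeFI_fg (N : SubFI (FreeFI k r d)) : N.FinitelyGenerated :=
  fg_of_wf (freeFI_wf k) N

end Chain

/-! ### Presenting a finitely generated FI-module as a quotient of a free one -/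

section Assembly

variable (k)
variable {V : FIModule k} {r : ℕ} {d : Fin r → ℕ} (w : ∀ i : Fin r, V.obj (d i))

noncomputable def piMap (n : ℕ) : (Mon r d n →₀ k) →ₗ[k] V.obj n :=
  Finsupp.linearCombination k (fun x : Mon r d n => V.map x.2 (w x.1))

theorem piMap_compat {m n : ℕ} (g : Fin m ↪ Fin n) (v : Mon r d m →₀ k) :
    piMap k w n ((FreeFI k r d).map g v) = V.map g (piMap k w m v) := by
  show piMap k w n (Finsupp.mapDomain (monMap g) v) = _
  rw [piMap, piMap, Finsupp.linearCombination_mapDomain,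
    Finsupp.apply_linearCombination]
  have hfun : ((fun x : Mon r d n => V.map x.2 (w x.1)) ∘ monMap g) =
      (⇑(V.map g) ∘ fun x : Mon r d m => V.map x.2 (w x.1)) := by
    funext x
    show V.map ((monMap (r := r) (d := d) g x).2) (w x.1) = V.map g (V.map x.2 (w x.1))
    rw [show (monMap (r := r) (d := d) g x).2 = x.2.trans g from rfl]
    exact LinearMap.congr_fun (V.map_comp x.2 g) (w x.1)
  rw [hfun]

/-- Pull a sub-FI-module of `V` back to the free FI-module. -/
noncomputable def pullFI (M : SubFI V) : SubFI (FreeFI k r d) where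
  carrier n := (M.carrier n).comap (piMap k w n)
  map_mem {m n} g {x} hx := by
    have hx' : piMap k w m x ∈ M.carrier m := hx
    have h2 : piMap k w n ((FreeFI k r d).map g x) ∈ M.carrier n := by
      rw [piMap_compat k w g x]
      exact M.map_mem g hx'
    exact h2

/-- The sub-FI-module of `V` given by the ranges of `piMap`. -/
noncomputable def rangeFI : SubFI V where
  carrier n := LinearMap.range (piMap k w n)
  map_mem {m n} g {x} hx := by
    obtain ⟨v, rfl⟩ := hx
    exact ⟨(FreeFI k r d).map g v, piMap_compat k w g v⟩

end Assembly

theorem fimodules_noetherian' (k : Type) [CommRing k] [IsNoetherianRing k]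
    (V : FIModule k) (hV : V.FinitelyGenerated) (N : SubFI V) :
    N.FinitelyGenerated := by
  classical
  obtain ⟨S, hS⟩ := hV
  let r : ℕ := Fintype.card ↥S
  let e : ↥S ≃ Fin r := Fintype.equivFin ↥S
  let el : Fin r → Σ n : ℕ, V.obj n := fun i => ↑(e.symm i)
  let d : Fin r → ℕ := fun i => (el i).1
  let w : ∀ i : Fin r, V.obj (d i) := fun i => (el i).2
  -- surjectivity of the presentation
  have hcontains : ∀ s ∈ S, s.2 ∈ (rangeFI k w).carrier s.1 := by
    intro s hs
    have gen : ∀ (s' : Σ n : ℕ, V.obj n), el (e ⟨s, hs⟩) = s' →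
        s'.2 ∈ LinearMap.range (piMap k w s'.1) := by
      rintro s' rfl
      refine ⟨Finsupp.single ⟨e ⟨s, hs⟩, Embedding.refl (Fin (d (e ⟨s, hs⟩)))⟩ 1, ?_⟩
      rw [piMap]
      erw [Finsupp.linearCombination_single, one_smul, V.map_id]
      rfl
    have hel : el (e ⟨s, hs⟩) = s := by simp [el]
    exact gen s hel
  have hsurj : ∀ n, Function.Surjective (piMap k w n) := by
    intro n x
    exact hS (rangeFI k w) hcontains n x
  -- pull back `N`, apply the free-module theorem, and push the generators forward
  obtain ⟨S', hS'N, hS'gen⟩ := freeFI_fg k (pullFI k w N)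
  refine ⟨S'.image (fun s => ⟨s.1, piMap k w s.1 s.2⟩), ?_, ?_⟩
  · intro s hs
    obtain ⟨s', hs', rfl⟩ := Finset.mem_image.1 hs
    exact hS'N s' hs'
  · intro M hM n x hx
    obtain ⟨y, rfl⟩ := hsurj n x
    have hy : y ∈ (pullFI k w N).carrier n := hx
    have harg : ∀ s' ∈ S', s'.2 ∈ (pullFI k w M).carrier s'.1 := by
      intro s' hs'
      exact hM ⟨s'.1, piMap k w s'.1 s'.2⟩ (Finset.mem_image_of_mem _ hs')
    exact hS'gen (pullFI k w M) harg n hy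

/-- **The Noetherian property of FI-modules** (Church–Ellenberg–Farb, Theorem 2.60).
Let `k` be a Noetherian ring containing `ℚ`.  Every sub-FI-module of a finitely
generated FI-module over `k` is finitely generated. -/
theorem fimodules_noetherian (k : Type) [CommRing k] [IsNoetherianRing k]
    [Algebra ℚ k] (V : FIModule k) (hV : V.FinitelyGenerated) (N : SubFI V) :
    N.FinitelyGenerated :=
  fimodules_noetherian' k V hV N
end

section
/- Let V be an FI#-module over a commutative ring k. Then for every injection f: S ↪ T of finite sets, the induced map f_*: V_S → V_T (via the underlying FI-module structure) is injective. In particular, for all m < n every map V_m → V_n induced by an injection {1,...,m} ↪ {1,...,n} is injective. -/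
open Function

universe u

variable {k : Type} [CommRing k]

noncomputable def myPartialInv {m n : ℕ} (f : Fin m ↪ Fin n) : PartialInj n m :=
  ⟨fun j => if h : ∃ i, f i = j then some h.choose else none, by
    intro i j x hi hj
    split_ifs at hi hj with h1 h2
    rw [← h1.choose_spec, ← h2.choose_spec, Option.some.inj hi, Option.some.inj hj]⟩

theorem myPartialInv_comp {m n : ℕ} (f : Fin m ↪ Fin n) :
    (myPartialInv f).comp (embToPartial f) = PartialInj.id m := by
  apply PartialInj.ext
  intro i
  have h : ∃ j, f j = f i := ⟨i, rfl⟩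
  show (if h : ∃ j, f j = f i then some h.choose else none) = some i
  rw [dif_pos h]
  exact congrArg some (f.injective h.choose_spec)

/-- **Injectivity in FI♯-modules** (Church–Ellenberg–Farb, Proposition 2.25).
If `V` is an FI♯-module over a commutative ring `k`, then for every injection
`f : S ↪ T` of finite sets the induced map `f_* : V_S → V_T` of the underlying
FI-module is injective.  In particular, for all `m < n` (indeed all `m, n`) every map
`V_m → V_n` induced by an injection `{1,…,m} ↪ {1,…,n}` is injective. -/
theorem fisharp_maps_injective (k : Type) [CommRing k] (V : FIsharpModule k)
    {m n : ℕ} (f : Fin m ↪ Fin n) :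
    Function.Injective ((V.toFI).map f) := by
  have : Function.LeftInverse (V.map (myPartialInv f)) ((V.toFI).map f) := by
    intro x
    show (V.map (myPartialInv f)).comp (V.map (embToPartial f)) x = x
    rw [← V.map_comp, myPartialInv_comp, V.map_id]
    rfl
  exact this.injective
end

section
/- Let V be an FI-module over a field of characteristic 0. If V is generated in degree ≤ d, then V has weight ≤ d: every irreducible constituent V(λ)_n of every V_n satisfies |λ| ≤ d. -/
open Function

universe u

variable {k : Type} [CommRing k]

/-! ### Partitions, Young symmetrizers and Specht modules -/

/-- The row index of box number `i` (0-indexed) in the canonical filling of the Young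
diagram with row lengths `μ` (read row by row). -/
def rowOf : List ℕ → ℕ → ℕ
  | [], _ => 0
  | a :: l, i => if i < a then 0 else rowOf l (i - a) + 1

/-- The column index of box number `i` in the canonical filling of the Young diagram
with row lengths `μ`. -/
def colOf : List ℕ → ℕ → ℕ
  | [], i => i
  | a :: l, i => if i < a then i else colOf l (i - a)

/-- The Young symmetrizer `c_μ = a_μ · b_μ` in the group algebra `k[S_n]` attached to the
canonical tableau of the partition `μ` of `n` (given as its list of row lengths):
`a_μ` is the sum of the row-preserving permutations and `b_μ` is the signed sum of the
column-preserving permutations. -/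
noncomputable def youngSym (k : Type) [CommRing k] (n : ℕ) (μ : List ℕ) :
    MonoidAlgebra k (Equiv.Perm (Fin n)) :=
  (∑ σ : Equiv.Perm (Fin n),
      if ∀ i : Fin n, rowOf μ ((σ i : ℕ)) = rowOf μ (i : ℕ)
      then MonoidAlgebra.single σ (1 : k) else 0) *
  (∑ σ : Equiv.Perm (Fin n),
      if ∀ i : Fin n, colOf μ ((σ i : ℕ)) = colOf μ (i : ℕ)
      then MonoidAlgebra.single σ (((Equiv.Perm.sign σ : ℤˣ) : ℤ) : k) else 0)

/-- Over a field of characteristic `0`, the irreducible representation `V_μ` of `S_n`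
attached to a partition `μ` of `n` occurs in a representation `ρ` if and only if the
Young symmetrizer `c_μ` acts by a nonzero operator.  We take this as the definition of
"`V_μ` is an irreducible constituent of `ρ`". -/
def repHasConstituent (k : Type) [CommRing k] {n : ℕ} {U : Type} [AddCommGroup U]
    [Module k U] (ρ : Representation k (Equiv.Perm (Fin n)) U) (μ : List ℕ) : Prop :=
  ρ.asAlgebraHom (youngSym k n μ) ≠ 0

/-- Over a field of characteristic `0`, the multiplicity of the irreducible `V_μ` in a
(finite-dimensional) representation `ρ` of `S_n` equals `dim_k (c_μ · U)`, the rank of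
the operator by which the Young symmetrizer acts. -/
noncomputable def repMultiplicity (k : Type) [CommRing k] {n : ℕ} {U : Type}
    [AddCommGroup U] [Module k U] (ρ : Representation k (Equiv.Perm (Fin n)) U)
    (μ : List ℕ) : ℕ :=
  Module.finrank k (LinearMap.range (ρ.asAlgebraHom (youngSym k n μ)))

/-- A partition (of an arbitrary natural number): a weakly decreasing list of positive
integers. -/
structure SPartition where
  parts : List ℕ
  sorted : parts.Pairwise (· ≥ ·)
  pos : ∀ p ∈ parts, 0 < p

/-- The size `|λ|` of a partition. -/
def SPartition.size (l : SPartition) : ℕ := l.parts.sum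

/-- The largest part `λ₁` of a partition. -/
def SPartition.width (l : SPartition) : ℕ := l.parts.headD 0

/-- The padded partition `λ[n] = (n - |λ|, λ₁, λ₂, …)`, as a list of row lengths.
(It is a genuine partition of `n` whenever `n ≥ |λ| + λ₁`.) -/
def SPartition.padded (l : SPartition) (n : ℕ) : List ℕ := (n - l.size) :: l.parts

/-- `V(λ)_n = V_{λ[n]}` is an irreducible constituent of `V_n`. -/
def FIModule.HasConstituentAt (V : FIModule k) (lam : SPartition) (n : ℕ) : Prop :=
  repHasConstituent k (V.rep n) (lam.padded n)

/-- An FI-module over a field of characteristic `0` has weight `≤ d` if every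
irreducible constituent `V(λ)_n` of every `V_n` satisfies `|λ| ≤ d`. -/
def FIModule.WeightLE (V : FIModule k) (d : ℕ) : Prop :=
  ∀ (n : ℕ) (lam : SPartition), lam.size + lam.width ≤ n →
    V.HasConstituentAt lam n → lam.size ≤ d

/-- The (left ideal model of the) Specht module: `k[S_n]·c_μ`, the image of right
multiplication by the Young symmetrizer on the group algebra. -/
noncomputable def spechtModule (k : Type) [CommRing k] (n : ℕ) (μ : List ℕ) :
    Submodule k (MonoidAlgebra k (Equiv.Perm (Fin n))) :=
  LinearMap.range (LinearMap.mulRight k (youngSym k n μ))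


lemma colOf_lt_head' (l : List ℕ) (hl : l.Pairwise (· ≥ ·)) (j : ℕ) (hj : j < l.sum) :
    colOf l j < l.headD 0 := by
  induction l generalizing j with
  | nil => simp at hj
  | cons a t ih =>
    simp only [colOf, List.headD]
    split
    · assumption
    · rename_i hja
      push_neg at hja
      have hsum : j - a < t.sum := by simp [List.sum_cons] at hj; omega
      have h2 := ih hl.of_cons (j - a) hsum
      cases t with
      | nil => simp at hsum
      | cons b t' =>
        have : b ≤ a := by have := (List.pairwise_cons.mp hl).1 b (by simp); exact this
        simp only [List.headD] at h2
        omega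

open Finset in
lemma exists_pair_outside (n s w m : ℕ) (l : List ℕ) (hl : l.Pairwise (· ≥ ·))
    (hs : l.sum = s) (hw : l.headD 0 = w) (hle : s + w ≤ n) (f : Fin m ↪ Fin n)
    (hm : m < s) :
    ∃ p q : Fin n, p ≠ q ∧ colOf ((n - s) :: l) (p : ℕ) = colOf ((n - s) :: l) (q : ℕ) ∧
      (∀ i, f i ≠ p) ∧ (∀ i, f i ≠ q) := by
  have hwn : w ≤ n - s := by omega
  set μ := (n - s) :: l with hμ
  have hP : ∀ i : ℕ, i < n → (colOf μ i < w ↔ (i < w ∨ n - s ≤ i)) := by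
    intro i hi
    rw [hμ]
    simp only [colOf]
    split
    · omega
    · rename_i hns
      push_neg at hns
      have hsum : i - (n - s) < l.sum := by omega
      have := colOf_lt_head' l hl _ hsum
      rw [hw] at this
      constructor
      · intro _; right; exact hns
      · intro _; exact this
  have hcard : (univ.filter fun i : Fin n => colOf μ (i : ℕ) < w).card = w + s := by
    have h1 : (univ.filter fun i : Fin n => colOf μ (i : ℕ) < w)
        = univ.filter fun i : Fin n => ((i : ℕ) < w ∨ n - s ≤ (i : ℕ)) := by
      apply Finset.filter_congr
      intro i _
      simpa using hP i i.isLt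
    have h3 : ((Iio n).filter fun i => i < w ∨ n - s ≤ i)
        = (univ.filter fun i : Fin n => ((i : ℕ) < w ∨ n - s ≤ (i : ℕ))).map Fin.valEmbedding := by
      rw [← Fin.map_valEmbedding_univ, Finset.filter_map]
      rfl
    rw [h1, ← Finset.card_map Fin.valEmbedding, ← h3]
    have h2 : ((Iio n).filter fun i => i < w ∨ n - s ≤ i) = Iio w ∪ Ico (n - s) n := by
      ext i
      simp only [mem_filter, mem_Iio, mem_union, mem_Ico]
      omega
    rw [h2, Finset.card_union_of_disjoint, Nat.card_Iio, Nat.card_Ico]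
    · omega
    · rw [Finset.disjoint_left]
      intro a ha hb
      simp only [mem_Iio] at ha
      simp only [mem_Ico] at hb
      omega
  set T := (univ.filter fun i : Fin n => colOf μ (i : ℕ) < w) \ (univ.map f) with hT
  have hTcard : w < T.card := by
    have h4 : (univ.filter fun i : Fin n => colOf μ (i : ℕ) < w).card - (univ.map f).card
        ≤ T.card := Finset.le_card_sdiff _ _
    rw [hcard, Finset.card_map, Finset.card_univ, Fintype.card_fin] at h4
    omega
  obtain ⟨p, hp, q, hq, hpq, hcol⟩ :=
    Finset.exists_ne_map_eq_of_card_lt_of_maps_to (t := Finset.range w)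
      (by simpa using hTcard)
      (fun i hi => by
        rw [hT, Finset.mem_coe, mem_sdiff, mem_filter] at hi
        simpa using hi.1.2)
  rw [hT, mem_sdiff] at hp hq
  refine ⟨p, q, hpq, hcol, ?_, ?_⟩
  · intro i hi; exact hp.2 (Finset.mem_map.mpr ⟨i, Finset.mem_univ i, hi⟩)
  · intro i hi; exact hq.2 (Finset.mem_map.mpr ⟨i, Finset.mem_univ i, hi⟩)

/-- **Generation degree bounds weight** (Church–Ellenberg–Farb, Proposition 2.51).
Let `V` be an FI-module over a field of characteristic `0`.  If `V` is generated in
degree `≤ d`, then `V` has weight `≤ d`: every irreducible constituent `V(λ)_n` of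
every `V_n` satisfies `|λ| ≤ d`. -/
theorem generation_degree_bounds_weight (k : Type) [Field k] [CharZero k]
    (V : FIModule k) (d : ℕ) (h : V.GeneratedInDegreeLE d) : V.WeightLE d := by
  intro n lam hle hconst
  by_contra hgt
  push_neg at hgt
  apply hconst
  set μ := lam.padded n with hμ
  set gen : ∀ n' : ℕ, Set (V.obj n') :=
    fun n' => {x | ∃ m, m ≤ d ∧ ∃ f : Fin m ↪ Fin n', ∃ y, x = V.map f y} with hgen
  set N : SubFI V :=
    { carrier := fun n' => Submodule.span k (gen n')
      map_mem := by
        intro a b f x hx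
        induction hx using Submodule.span_induction with
        | mem z hz =>
          obtain ⟨m, hm, g, y, rfl⟩ := hz
          apply Submodule.subset_span
          refine ⟨m, hm, g.trans f, y, ?_⟩
          rw [V.map_comp]
          rfl
        | zero => rw [map_zero]; exact Submodule.zero_mem _
        | add u v _ _ hu hv => rw [map_add]; exact Submodule.add_mem _ hu hv
        | smul c u _ hu => rw [map_smul]; exact Submodule.smul_mem _ c hu } with hN
  have hspan : ∀ x : V.obj n, x ∈ Submodule.span k (gen n) := by
    intro x
    exact h N (fun m hm x => Submodule.subset_span
      ⟨m, hm, Function.Embedding.refl _, x, by rw [V.map_id]; rfl⟩) n x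
  -- each generator is killed by the Young symmetrizer
  have hkill : ∀ x ∈ gen n, ((V.rep n).asAlgebraHom (youngSym k n μ)) x = 0 := by
    rintro x ⟨m, hm, f, y, rfl⟩
    obtain ⟨p, q, hpq, hcol, hfp, hfq⟩ :=
      exists_pair_outside n lam.size lam.width m lam.parts lam.sorted rfl rfl hle f
        (lt_of_le_of_lt hm hgt)
    set τ : Equiv.Perm (Fin n) := Equiv.swap p q with hτ
    have hτcol : ∀ i : Fin n, colOf μ ((τ i : Fin n) : ℕ) = colOf μ (i : ℕ) := by
      intro i
      rcases eq_or_ne i p with rfl | hip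
      · rw [hτ, Equiv.swap_apply_left]; exact hcol.symm
      rcases eq_or_ne i q with rfl | hiq
      · rw [hτ, Equiv.swap_apply_right]; exact hcol
      · rw [hτ, Equiv.swap_apply_of_ne_of_ne hip hiq]
    have hτx : (V.rep n) τ (V.map f y) = V.map f y := by
      show V.map τ.toEmbedding (V.map f y) = V.map f y
      rw [← LinearMap.comp_apply, ← V.map_comp]
      have hft : f.trans τ.toEmbedding = f := by
        apply Function.Embedding.ext
        intro i
        show τ (f i) = f i
        rw [hτ]
        exact Equiv.swap_apply_of_ne_of_ne (hfp i) (hfq i)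
      rw [hft]
    -- the column-antisymmetrizer part kills x
    set Cc : Equiv.Perm (Fin n) → Prop :=
      fun σ => ∀ i : Fin n, colOf μ ((σ i : Fin n) : ℕ) = colOf μ (i : ℕ) with hCc
    set g : Equiv.Perm (Fin n) → V.obj n :=
      fun σ => if Cc σ then (((Equiv.Perm.sign σ : ℤˣ) : ℤ) : k) • ((V.rep n) σ (V.map f y))
        else 0 with hg
    have hBsum : ((V.rep n).asAlgebraHom
        (∑ σ : Equiv.Perm (Fin n),
          if Cc σ then MonoidAlgebra.single σ (((Equiv.Perm.sign σ : ℤˣ) : ℤ) : k) else 0))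
        (V.map f y) = ∑ σ : Equiv.Perm (Fin n), g σ := by
      rw [map_sum, LinearMap.sum_apply]
      refine Finset.sum_congr rfl fun σ _ => ?_
      simp only [hg]
      by_cases hc : Cc σ
      · rw [if_pos hc, if_pos hc, Representation.asAlgebraHom_single, LinearMap.smul_apply]
      · rw [if_neg hc, if_neg hc, map_zero, LinearMap.zero_apply]
    have hCτ : ∀ σ : Equiv.Perm (Fin n), Cc (σ * τ) ↔ Cc σ := by
      intro σ
      constructor
      · intro hcc i
        have h1 := hcc (τ i)
        rw [Equiv.Perm.mul_apply, hτ, Equiv.swap_apply_self] at h1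
        rw [h1]
        exact hτcol i
      · intro hcc i
        rw [Equiv.Perm.mul_apply, hcc (τ i)]
        exact hτcol i
    have hneg : ∀ σ : Equiv.Perm (Fin n), g (σ * τ) = - g σ := by
      intro σ
      simp only [hg]
      by_cases hc : Cc σ
      · rw [if_pos ((hCτ σ).mpr hc), if_pos hc]
        have h1 : (((Equiv.Perm.sign (σ * τ) : ℤˣ) : ℤ) : k)
            = -(((Equiv.Perm.sign σ : ℤˣ) : ℤ) : k) := by
          rw [map_mul, hτ, Equiv.Perm.sign_swap hpq]
          push_cast
          ring
        have h2 : (V.rep n) (σ * τ) (V.map f y) = (V.rep n) σ (V.map f y) := by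
          rw [map_mul, Module.End.mul_apply, hτx]
        rw [h1, h2, neg_smul]
      · rw [if_neg (fun hcc => hc ((hCτ σ).mp hcc)), if_neg hc, neg_zero]
    have hS : (∑ σ : Equiv.Perm (Fin n), g σ) = 0 := by
      have h5 : (∑ σ : Equiv.Perm (Fin n), g σ) = ∑ σ : Equiv.Perm (Fin n), - g σ := by
        rw [← Equiv.sum_comp (Equiv.mulRight τ) g]
        exact Finset.sum_congr rfl fun σ _ => hneg σ
      rw [Finset.sum_neg_distrib] at h5
      have h7 : (2 : k) • (∑ σ : Equiv.Perm (Fin n), g σ) = 0 := by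
        rw [two_smul]
        nth_rewrite 1 [h5]
        exact neg_add_cancel _
      exact (smul_eq_zero.mp h7).resolve_left two_ne_zero
    show ((V.rep n).asAlgebraHom (youngSym k n μ)) (V.map f y) = 0
    rw [youngSym, map_mul, Module.End.mul_apply, hBsum, hS, map_zero]
  have hker : Submodule.span k (gen n) ≤
      LinearMap.ker ((V.rep n).asAlgebraHom (youngSym k n μ)) :=
    Submodule.span_le.mpr fun x hx => LinearMap.mem_ker.mpr (hkill x hx)
  exact LinearMap.ext fun x => hker (hspan x)
end
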